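/- arXiv:1507.02398 — 5 statements merged into one kernel-verified Lean document; each statement's English description precedes it below -/
import Mathlib

section
/- Fix a cube Q_0 ⊂ ℝ^n and let F ∈ L^1(Q_0) be nonnegative. Assume there are constants Θ ≥ 1 and 0 ≤ δ < 1/2 such that for every Q ∈ D(Q_0)\{Q_0} there exist nonnegative measurable functions H^Q, G^Q and a constant g^Q ≥ 0 satisfying: (i) F(x) ≤ G^Q(x) + H^Q(x) for a.e. x ∈ Q; (ii) ‖H^Q‖_{L^∞(Q)} ≤ Θ · (average of F over Q̂); (iii) (average of G^Q over Q) ≤ δ · (average of F over Q̂) + g^Q. Define G*_{Q_0}(x) = sup{ g^Q : Q ∈ D(Q_0), x ∈ Q }. Then for every λ ≥ (average of F over Q_0), every K > Θ and every 0 < γ < 1, |{x ∈ Q_0 : M_{Q_0}F(x) > Kλ and G*_{Q_0}(x) ≤ γλ}| ≤ ((δ+γ)/(K−Θ)) · |{x ∈ Q_0 : M_{Q_0}F(x) > λ}|. -/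
open MeasureTheory Filter
open scoped ENNReal NNReal Topology

structure Cube (n : ℕ) where
  corner : Fin n → ℝ
  side : ℝ
  side_pos : 0 < side

namespace Cube

variable {n : ℕ}

/-- The (half-open) cube determined by the data. -/
def set (Q : Cube n) : Set (Fin n → ℝ) :=
  {x | ∀ i, Q.corner i ≤ x i ∧ x i < Q.corner i + Q.side}

/-- The dyadic subcube of `Q` of generation `k` in position `m`. -/
noncomputable def dyadic (Q : Cube n) (k : ℕ) (m : Fin n → ℕ) : Cube n :=
  ⟨fun i => Q.corner i + Q.side / 2 ^ k * (m i : ℝ), Q.side / 2 ^ k,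
    div_pos Q.side_pos (by positivity)⟩

/-- `Q` belongs to the family `𝒟(Q₀)` of dyadic subcubes of `Q₀`. -/
def IsDyadicSub (Q₀ Q : Cube n) : Prop :=
  ∃ (k : ℕ) (m : Fin n → ℕ), (∀ i, m i < 2 ^ k) ∧ Q = Q₀.dyadic k m

/-- The average `(1/|Q|)∫_Q f dx` (of a nonnegative function), with values in `ℝ≥0∞`. -/
noncomputable def avg (Q : Cube n) (f : (Fin n → ℝ) → ℝ) : ℝ≥0∞ :=
  (∫⁻ x in Q.set, ENNReal.ofReal (f x)) / volume Q.set

/-- The (real-valued) average `f_Q = (1/|Q|)∫_Q f dx`. -/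
noncomputable def ravg (Q : Cube n) (f : (Fin n → ℝ) → ℝ) : ℝ :=
  ⨍ x in Q.set, f x

/-- The local dyadic maximal function `M_{Q₀} f`. -/
noncomputable def maximal (Q₀ : Cube n) (f : (Fin n → ℝ) → ℝ) (x : Fin n → ℝ) : ℝ≥0∞ :=
  ⨆ (k : ℕ) (m : Fin n → ℕ) (_ : (∀ i, m i < 2 ^ k) ∧ x ∈ (Q₀.dyadic k m).set),
    avg (Q₀.dyadic k m) f

/-- `G*_{Q₀}(x) = sup { g(Q) : Q ∈ 𝒟(Q₀), x ∈ Q }`. -/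
noncomputable def gstar (Q₀ : Cube n) (g : Cube n → ℝ) (x : Fin n → ℝ) : ℝ≥0∞ :=
  ⨆ (k : ℕ) (m : Fin n → ℕ) (_ : (∀ i, m i < 2 ^ k) ∧ x ∈ (Q₀.dyadic k m).set),
    ENNReal.ofReal (g (Q₀.dyadic k m))

/-- The local dyadic sharp maximal function `M^#_{Q₀} f`. -/
noncomputable def sharpMaximal (Q₀ : Cube n) (f : (Fin n → ℝ) → ℝ) (x : Fin n → ℝ) : ℝ≥0∞ :=
  ⨆ (k : ℕ) (m : Fin n → ℕ) (_ : (∀ i, m i < 2 ^ k) ∧ x ∈ (Q₀.dyadic k m).set),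
    avg (Q₀.dyadic k m) (fun y => |f y - ravg (Q₀.dyadic k m) f|)

/-- The normalized weak `L^p` (quasi-)norm on a cube, for an `ℝ≥0∞`-valued function. -/
noncomputable def wnorm (Q : Cube n) (p : ℝ) (f : (Fin n → ℝ) → ℝ≥0∞) : ℝ≥0∞ :=
  ⨆ (t : ℝ) (_ : 0 < t),
    ENNReal.ofReal t * (volume {x ∈ Q.set | ENNReal.ofReal t < f x} / volume Q.set) ^ (1 / p)

/-- The normalized `L^p` norm `((1/|Q|)∫_Q f^p dx)^{1/p}` for an `ℝ≥0∞`-valued function. -/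
noncomputable def lpnorm (Q : Cube n) (p : ℝ) (f : (Fin n → ℝ) → ℝ≥0∞) : ℝ≥0∞ :=
  ((∫⁻ x in Q.set, f x ^ p) / volume Q.set) ^ (1 / p)

/-- The dyadic John–Nirenberg functional `‖f‖_{JN_p^{dyadic},Q}`. -/
noncomputable def jnNorm (Q : Cube n) (p : ℝ) (f : (Fin n → ℝ) → ℝ) : ℝ≥0∞ :=
  ⨆ (𝒮 : Set (Cube n)) (_ : (∀ R ∈ 𝒮, Q.IsDyadicSub R) ∧ 𝒮.PairwiseDisjoint Cube.set),
    ((∑' R : 𝒮, avg (R : Cube n) (fun x => |f x - ravg (R : Cube n) f|) ^ p *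
        volume (R : Cube n).set) / volume Q.set) ^ (1 / p)

/-- `sup ((1/|Q|) Σ_i a(Q_i)^p |Q_i|)^{1/p}` over pairwise disjoint families in `𝒟(Q)`. -/
noncomputable def dpSup (Q : Cube n) (p : ℝ) (a : Cube n → ℝ) : ℝ≥0∞ :=
  ⨆ (𝒮 : Set (Cube n)) (_ : (∀ R ∈ 𝒮, Q.IsDyadicSub R) ∧ 𝒮.PairwiseDisjoint Cube.set),
    ((∑' R : 𝒮, ENNReal.ofReal (a (R : Cube n)) ^ p * volume (R : Cube n).set) /
      volume Q.set) ^ (1 / p)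

/-- `‖a‖_{D_p,Q}`. -/
noncomputable def dpNorm (Q : Cube n) (p : ℝ) (a : Cube n → ℝ) : ℝ≥0∞ :=
  dpSup Q p a / ENNReal.ofReal (a Q)

/-- `‖a‖_{D_p^{dyadic}(Q₀)}`. -/
noncomputable def dpGlobal (Q₀ : Cube n) (p : ℝ) (a : Cube n → ℝ) : ℝ≥0∞ :=
  ⨆ (Q : Cube n) (_ : Q₀.IsDyadicSub Q), dpNorm Q p a

end Cube

namespace GoodLambda

open MeasureTheory Set
open scoped ENNReal

variable {n : ℕ} {Q₀ : Cube n}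

lemma mem_dyadic {k : ℕ} {m : Fin n → ℕ} {x : Fin n → ℝ} :
    x ∈ (Q₀.dyadic k m).set ↔ ∀ i,
      Q₀.corner i + Q₀.side / 2 ^ k * m i ≤ x i ∧
      x i < Q₀.corner i + Q₀.side / 2 ^ k * m i + Q₀.side / 2 ^ k := by
  simp [Cube.set, Cube.dyadic]

lemma u_pos (Q₀ : Cube n) (k : ℕ) : (0:ℝ) < Q₀.side / 2 ^ k :=
  div_pos Q₀.side_pos (by positivity)

/-- Uniqueness of the dyadic index at a given level. -/
lemma index_unique {k : ℕ} {m m' : Fin n → ℕ} {x : Fin n → ℝ}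
    (h : x ∈ (Q₀.dyadic k m).set) (h' : x ∈ (Q₀.dyadic k m').set) : m = m' := by
  funext i
  rw [mem_dyadic] at h h'
  obtain ⟨h1, h2⟩ := h i
  obtain ⟨h1', h2'⟩ := h' i
  have u := u_pos Q₀ k
  have A : (m i : ℝ) < m' i + 1 := by
    have := h1.trans_lt h2'
    nlinarith
  have B : (m' i : ℝ) < m i + 1 := by
    have := h1'.trans_lt h2
    nlinarith
  have A' : m i < m' i + 1 := by exact_mod_cast A
  have B' : m' i < m i + 1 := by exact_mod_cast B
  omega

/-- A child cube is contained in its parent. -/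
lemma child_subset {k : ℕ} {m : Fin n → ℕ} :
    (Q₀.dyadic (k+1) m).set ⊆ (Q₀.dyadic k (fun i => m i / 2)).set := by
  intro x hx
  rw [mem_dyadic] at hx ⊢
  intro i
  obtain ⟨h1, h2⟩ := hx i
  set u : ℝ := Q₀.side / 2 ^ (k+1) with hu
  have hupos : (0:ℝ) < u := u_pos Q₀ (k+1)
  have hk : Q₀.side / 2 ^ k = 2 * u := by rw [hu]; field_simp; ring
  rw [hk]
  have hml : ((m i / 2 : ℕ) : ℝ) * 2 ≤ (m i : ℝ) := by
    exact_mod_cast Nat.cast_le.2 (Nat.div_mul_le_self (m i) 2)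
  have hmr : (m i : ℝ) ≤ ((m i / 2 : ℕ) : ℝ) * 2 + 1 := by
    have : m i ≤ m i / 2 * 2 + 1 := by omega
    exact_mod_cast this
  constructor
  · nlinarith
  · nlinarith

/-- Ancestor inclusion: `D (j+d) m ⊆ D j (m / 2^d)`. -/
lemma anc_subset' (j d : ℕ) (m : Fin n → ℕ) :
    (Q₀.dyadic (j+d) m).set ⊆ (Q₀.dyadic j (fun i => m i / 2 ^ d)).set := by
  induction d generalizing m with
  | zero => simp
  | succ d ih =>
    intro x hx
    have h1 : x ∈ (Q₀.dyadic (j+d) (fun i => m i / 2)).set := child_subset hx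
    have h2 := ih (fun i => m i / 2) h1
    have : (fun i => m i / 2 / 2 ^ d) = fun i => m i / 2 ^ (d+1) := by
      funext i; rw [Nat.div_div_eq_div_mul]; ring_nf
    rwa [this] at h2

lemma anc_subset {j k : ℕ} (hjk : j ≤ k) (m : Fin n → ℕ) :
    (Q₀.dyadic k m).set ⊆ (Q₀.dyadic j (fun i => m i / 2 ^ (k - j))).set := by
  have := anc_subset' (Q₀ := Q₀) j (k - j) m
  rwa [Nat.add_sub_cancel' hjk] at this

lemma anc_valid {j k : ℕ} (hjk : j ≤ k) {m : Fin n → ℕ} (hm : ∀ i, m i < 2 ^ k) :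
    ∀ i, m i / 2 ^ (k - j) < 2 ^ j := by
  intro i
  rw [Nat.div_lt_iff_lt_mul (by positivity), ← pow_add]
  rw [Nat.add_sub_cancel' hjk]
  exact hm i

lemma dyadic_zero_set : (Q₀.dyadic 0 fun _ => 0).set = Q₀.set := by
  ext x; simp [Cube.set, Cube.dyadic]

lemma dyadic_subset_base {k : ℕ} {m : Fin n → ℕ} (hm : ∀ i, m i < 2 ^ k) :
    (Q₀.dyadic k m).set ⊆ Q₀.set := by
  have h := anc_subset (Q₀ := Q₀) (Nat.zero_le k) m
  have e : (fun i => m i / 2 ^ (k - 0)) = fun _ : Fin n => 0 := by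
    funext i; simp only [Nat.sub_zero]; exact Nat.div_eq_of_lt (hm i)
  rw [e, dyadic_zero_set] at h
  exact h

/-- Existence of the dyadic index at each level. -/
lemma exists_index {x : Fin n → ℝ} (hx : x ∈ Q₀.set) (k : ℕ) :
    ∃ m : Fin n → ℕ, (∀ i, m i < 2 ^ k) ∧ x ∈ (Q₀.dyadic k m).set := by
  set u : ℝ := Q₀.side / 2 ^ k with hu
  have hupos : (0:ℝ) < u := u_pos Q₀ k
  refine ⟨fun i => ⌊(x i - Q₀.corner i) / u⌋₊, fun i => ?_, ?_⟩
  · obtain ⟨h1, h2⟩ := hx i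
    rw [Nat.floor_lt (div_nonneg (by linarith) hupos.le)]
    rw [div_lt_iff₀ hupos]
    have h3 : u * 2 ^ k = Q₀.side := by rw [hu]; field_simp
    push_cast
    rw [mul_comm ((2:ℝ)^k) u, h3]
    linarith
  · rw [mem_dyadic]
    intro i
    obtain ⟨h1, h2⟩ := hx i
    have hy : (0:ℝ) ≤ (x i - Q₀.corner i) / u := div_nonneg (by linarith) hupos.le
    have hfl := Nat.floor_le hy
    have hfu := Nat.lt_floor_add_one ((x i - Q₀.corner i) / u)
    constructor
    · have := mul_le_mul_of_nonneg_right hfl hupos.le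
      rw [div_mul_cancel₀ _ hupos.ne'] at this
      rw [← hu]; linarith
    · have := mul_lt_mul_of_pos_right hfu hupos
      rw [div_mul_cancel₀ _ hupos.ne'] at this
      rw [← hu]; linarith

/-- Two dyadic cubes containing a common point are nested. -/
lemma nested {j k : ℕ} (hjk : j ≤ k) {m m' : Fin n → ℕ} {y : Fin n → ℝ}
    (hy : y ∈ (Q₀.dyadic j m).set) (hy' : y ∈ (Q₀.dyadic k m').set) :
    (Q₀.dyadic k m').set ⊆ (Q₀.dyadic j m).set ∧ m = fun i => m' i / 2 ^ (k - j) := by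
  have hsub := anc_subset (Q₀ := Q₀) hjk m'
  have := index_unique hy (hsub hy')
  exact ⟨this ▸ hsub, this⟩

lemma cube_set_eq_pi (Q : Cube n) :
    Q.set = Set.univ.pi fun i => Set.Ico (Q.corner i) (Q.corner i + Q.side) := by
  ext x; simp [Cube.set, Set.mem_pi, Set.mem_Ico]

lemma measurableSet_cube (Q : Cube n) : MeasurableSet Q.set := by
  rw [cube_set_eq_pi]
  exact MeasurableSet.univ_pi fun i => measurableSet_Ico

lemma volume_cube (Q : Cube n) : volume Q.set = ENNReal.ofReal Q.side ^ n := by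
  rw [cube_set_eq_pi, volume_pi_pi]
  simp [Real.volume_Ico]

lemma volume_cube_ne_zero (Q : Cube n) : volume Q.set ≠ 0 := by
  rw [volume_cube]
  exact pow_ne_zero _ (by simp [ENNReal.ofReal_eq_zero, not_le, Q.side_pos])

lemma volume_cube_ne_top (Q : Cube n) : volume Q.set ≠ ∞ := by
  rw [volume_cube]
  exact ENNReal.pow_ne_top ENNReal.ofReal_ne_top

/-- Calderón–Zygmund selection: maximal dyadic cubes satisfying `P`. -/
lemma selection (Q₀ : Cube n) (P : ℕ → (Fin n → ℕ) → Prop) :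
    ∃ S : Set (ℕ × (Fin n → ℕ)),
      (∀ p ∈ S, (∀ i, p.2 i < 2 ^ p.1) ∧ P p.1 p.2) ∧
      (S.PairwiseDisjoint fun p => (Q₀.dyadic p.1 p.2).set) ∧
      ({x ∈ Q₀.set | ∃ k m, (∀ i, m i < 2 ^ k) ∧ x ∈ (Q₀.dyadic k m).set ∧ P k m}
        ⊆ ⋃ p ∈ S, (Q₀.dyadic p.1 p.2).set) ∧
      (∀ p ∈ S, ∀ j, j < p.1 → ¬ P j (fun i => p.2 i / 2 ^ (p.1 - j))) := by
  classical
  refine ⟨{p | (∀ i, p.2 i < 2 ^ p.1) ∧ P p.1 p.2 ∧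
      ∀ j, j < p.1 → ¬ P j (fun i => p.2 i / 2 ^ (p.1 - j))}, ?_, ?_, ?_, ?_⟩
  · exact fun p hp => ⟨hp.1, hp.2.1⟩
  · -- pairwise disjointness
    have key : ∀ p q : ℕ × (Fin n → ℕ),
        p ∈ {p : ℕ × (Fin n → ℕ) | (∀ i, p.2 i < 2 ^ p.1) ∧ P p.1 p.2 ∧
          ∀ j, j < p.1 → ¬ P j (fun i => p.2 i / 2 ^ (p.1 - j))} →
        q ∈ {p : ℕ × (Fin n → ℕ) | (∀ i, p.2 i < 2 ^ p.1) ∧ P p.1 p.2 ∧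
          ∀ j, j < p.1 → ¬ P j (fun i => p.2 i / 2 ^ (p.1 - j))} →
        p ≠ q → p.1 ≤ q.1 →
        Disjoint (Q₀.dyadic p.1 p.2).set (Q₀.dyadic q.1 q.2).set := by
      intro p q hp hq hne hle
      rw [Set.disjoint_left]
      intro y hyp hyq
      rcases eq_or_lt_of_le hle with heq | hlt
      · obtain ⟨k, m⟩ := p; obtain ⟨k', m'⟩ := q
        simp only at heq hyp hyq
        subst heq
        exact hne (Prod.ext rfl (index_unique hyp hyq))
      · obtain ⟨-, hmq⟩ := nested hle hyp hyq
        exact hq.2.2 p.1 hlt (hmq ▸ hp.2.1)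
    intro p hp q hq hne
    rcases le_total p.1 q.1 with h | h
    · exact key p q hp hq hne h
    · exact (key q p hq hp hne.symm h).symm
  · -- covering
    intro x hx
    obtain ⟨hxQ, k₀, m₀, hv₀, hx₀, hP₀⟩ := hx
    have hex : ∃ k, ∃ m : Fin n → ℕ, (∀ i, m i < 2 ^ k) ∧ x ∈ (Q₀.dyadic k m).set ∧ P k m :=
      ⟨k₀, m₀, hv₀, hx₀, hP₀⟩
    set k := Nat.find hex with hk
    obtain ⟨m, hvm, hxm, hPm⟩ := Nat.find_spec hex
    have hmem : (k, m) ∈ {p : ℕ × (Fin n → ℕ) | (∀ i, p.2 i < 2 ^ p.1) ∧ P p.1 p.2 ∧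
        ∀ j, j < p.1 → ¬ P j (fun i => p.2 i / 2 ^ (p.1 - j))} := by
      refine ⟨hvm, hPm, fun j hj hPj => ?_⟩
      have hxj : x ∈ (Q₀.dyadic j (fun i => m i / 2 ^ (k - j))).set :=
        anc_subset hj.le m hxm
      exact Nat.find_min hex hj ⟨_, anc_valid hj.le hvm, hxj, hPj⟩
    exact Set.mem_biUnion hmem hxm
  · exact fun p hp => hp.2.2

lemma avg_congr_set {Q Q' : Cube n} (h : Q.set = Q'.set) (f : (Fin n → ℝ) → ℝ) :
    Cube.avg Q f = Cube.avg Q' f := by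
  simp [Cube.avg, h]

lemma lt_avg_iff {Q : Cube n} {f : (Fin n → ℝ) → ℝ} {t : ℝ≥0∞} :
    t < Cube.avg Q f ↔ t * volume Q.set < ∫⁻ x in Q.set, ENNReal.ofReal (f x) :=
  ENNReal.lt_div_iff_mul_lt (Or.inl (volume_cube_ne_zero Q)) (Or.inl (volume_cube_ne_top Q))

lemma lintegral_eq_avg_mul (Q : Cube n) (f : (Fin n → ℝ) → ℝ) :
    ∫⁻ x in Q.set, ENNReal.ofReal (f x) = Cube.avg Q f * volume Q.set := by
  rw [Cube.avg, ENNReal.div_mul_cancel (volume_cube_ne_zero Q) (volume_cube_ne_top Q)]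

lemma avg_le_avg_add_const {R : Cube n} {f h : (Fin n → ℝ) → ℝ} (C : ℝ≥0∞)
    (hfh : ∀ᵐ x ∂(volume.restrict R.set), ENNReal.ofReal (f x) ≤ ENNReal.ofReal (h x) + C) :
    Cube.avg R f ≤ Cube.avg R h + C := by
  have h1 : ∫⁻ x in R.set, ENNReal.ofReal (f x)
      ≤ ∫⁻ x in R.set, (ENNReal.ofReal (h x) + C) := lintegral_mono_ae hfh
  rw [lintegral_add_right _ measurable_const, setLIntegral_const] at h1
  calc Cube.avg R f ≤ ((∫⁻ x in R.set, ENNReal.ofReal (h x)) + C * volume R.set)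
        / volume R.set := ENNReal.div_le_div_right h1 _
    _ = Cube.avg R h + C * volume R.set / volume R.set := ENNReal.add_div
    _ = Cube.avg R h + C := by
        rw [mul_div_assoc, ENNReal.div_self (volume_cube_ne_zero R) (volume_cube_ne_top R),
          mul_one]

/-- Weak (1,1) bound for the dyadic maximal operator localized to `Qset`. -/
lemma weak11 (Q₀ : Cube n) (Qset : Set (Fin n → ℝ)) (h : (Fin n → ℝ) → ℝ)
    (t : ℝ≥0∞) :
    t * volume {x | ∃ k m, (∀ i, m i < 2 ^ k) ∧ x ∈ (Q₀.dyadic k m).set ∧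
        (Q₀.dyadic k m).set ⊆ Qset ∧ t < Cube.avg (Q₀.dyadic k m) h}
      ≤ ∫⁻ x in Qset, ENNReal.ofReal (h x) := by
  obtain ⟨S, hSval, hSdisj, hScov, -⟩ := selection Q₀
    (fun k m => (Q₀.dyadic k m).set ⊆ Qset ∧ t < Cube.avg (Q₀.dyadic k m) h)
  have hcov : {x | ∃ k m, (∀ i, m i < 2 ^ k) ∧ x ∈ (Q₀.dyadic k m).set ∧
      (Q₀.dyadic k m).set ⊆ Qset ∧ t < Cube.avg (Q₀.dyadic k m) h}
      ⊆ ⋃ p ∈ S, (Q₀.dyadic p.1 p.2).set := by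
    intro x hx
    obtain ⟨k, m, hv, hxm, hsub, hlt⟩ := hx
    exact hScov ⟨dyadic_subset_base hv hxm, k, m, hv, hxm, hsub, hlt⟩
  calc t * volume {x | ∃ k m, (∀ i, m i < 2 ^ k) ∧ x ∈ (Q₀.dyadic k m).set ∧
        (Q₀.dyadic k m).set ⊆ Qset ∧ t < Cube.avg (Q₀.dyadic k m) h}
      ≤ t * volume (⋃ p ∈ S, (Q₀.dyadic p.1 p.2).set) := by
        exact mul_le_mul_right (measure_mono hcov) t
    _ ≤ t * ∑' p : S, volume (Q₀.dyadic (p : ℕ × (Fin n → ℕ)).1 (p : ℕ × (Fin n → ℕ)).2).set := by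
        exact mul_le_mul_right (measure_biUnion_le volume (Set.to_countable S) _) t
    _ = ∑' p : S, t * volume (Q₀.dyadic (p : ℕ × (Fin n → ℕ)).1 (p : ℕ × (Fin n → ℕ)).2).set :=
        (ENNReal.tsum_mul_left).symm
    _ ≤ ∑' p : S, ∫⁻ x in (Q₀.dyadic (p : ℕ × (Fin n → ℕ)).1 (p : ℕ × (Fin n → ℕ)).2).set,
          ENNReal.ofReal (h x) := by
        refine ENNReal.tsum_le_tsum fun p => ?_
        exact (lt_avg_iff.1 (hSval p p.2).2.2).le
    _ = ∫⁻ x in ⋃ p : S, (Q₀.dyadic (p : ℕ × (Fin n → ℕ)).1 (p : ℕ × (Fin n → ℕ)).2).set,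
          ENNReal.ofReal (h x) := by
        refine (lintegral_iUnion (fun p => measurableSet_cube _) ?_ _).symm
        intro a b hab
        exact hSdisj a.2 b.2 (fun e => hab (Subtype.ext e))
    _ ≤ ∫⁻ x in Qset, ENNReal.ofReal (h x) := by
        refine lintegral_mono_set ?_
        refine Set.iUnion_subset fun p => (hSval p p.2).2.1

lemma lt_maximal_iff {Q₀ : Cube n} {f : (Fin n → ℝ) → ℝ} {x : Fin n → ℝ} {t : ℝ≥0∞} :
    t < Cube.maximal Q₀ f x ↔ ∃ k m, ((∀ i, m i < 2 ^ k) ∧ x ∈ (Q₀.dyadic k m).set) ∧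
      t < Cube.avg (Q₀.dyadic k m) f := by
  simp only [Cube.maximal, lt_iSup_iff, exists_prop]

lemma avg_le_maximal {Q₀ : Cube n} {f : (Fin n → ℝ) → ℝ} {x : Fin n → ℝ} {k : ℕ}
    {m : Fin n → ℕ} (hv : ∀ i, m i < 2 ^ k) (hx : x ∈ (Q₀.dyadic k m).set) :
    Cube.avg (Q₀.dyadic k m) f ≤ Cube.maximal Q₀ f x :=
  le_iSup_of_le k (le_iSup_of_le m (le_iSup_of_le ⟨hv, hx⟩ le_rfl))

lemma le_gstar {Q₀ : Cube n} {g : Cube n → ℝ} {x : Fin n → ℝ} {k : ℕ}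
    {m : Fin n → ℕ} (hv : ∀ i, m i < 2 ^ k) (hx : x ∈ (Q₀.dyadic k m).set) :
    ENNReal.ofReal (g (Q₀.dyadic k m)) ≤ Cube.gstar Q₀ g x :=
  le_iSup_of_le k (le_iSup_of_le m (le_iSup_of_le ⟨hv, hx⟩ le_rfl))

end GoodLambda


/-- **Good-λ inequality (dyadic case).** -/
theorem good_lambda_dyadic (n : ℕ) (Q₀ : Cube n) (F : (Fin n → ℝ) → ℝ)
    (hFmeas : Measurable F) (hFnonneg : ∀ x, 0 ≤ F x)
    (hFint : IntegrableOn F Q₀.set)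
    (Θ δ : ℝ) (hΘ : 1 ≤ Θ) (hδ0 : 0 ≤ δ) (hδ1 : δ < 1 / 2)
    (H G : Cube n → (Fin n → ℝ) → ℝ) (g : Cube n → ℝ)
    (hHmeas : ∀ Q, Measurable (H Q)) (hGmeas : ∀ Q, Measurable (G Q))
    (hHnn : ∀ Q x, 0 ≤ H Q x) (hGnn : ∀ Q x, 0 ≤ G Q x) (hgnn : ∀ Q, 0 ≤ g Q)
    (h1 : ∀ (k : ℕ) (m : Fin n → ℕ), (∀ i, m i < 2 ^ (k + 1)) →
      ∀ᵐ x ∂(volume.restrict (Q₀.dyadic (k + 1) m).set),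
        F x ≤ G (Q₀.dyadic (k + 1) m) x + H (Q₀.dyadic (k + 1) m) x)
    (h2 : ∀ (k : ℕ) (m : Fin n → ℕ), (∀ i, m i < 2 ^ (k + 1)) →
      eLpNorm (H (Q₀.dyadic (k + 1) m)) ⊤ (volume.restrict (Q₀.dyadic (k + 1) m).set)
        ≤ ENNReal.ofReal Θ * Cube.avg (Q₀.dyadic k (fun i => m i / 2)) F)
    (h3 : ∀ (k : ℕ) (m : Fin n → ℕ), (∀ i, m i < 2 ^ (k + 1)) →
      Cube.avg (Q₀.dyadic (k + 1) m) (G (Q₀.dyadic (k + 1) m))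
        ≤ ENNReal.ofReal δ * Cube.avg (Q₀.dyadic k (fun i => m i / 2)) F
          + ENNReal.ofReal (g (Q₀.dyadic (k + 1) m)))
    (lam K γ : ℝ) (hlam : Cube.avg Q₀ F ≤ ENNReal.ofReal lam)
    (hK : Θ < K) (hγ0 : 0 < γ) (hγ1 : γ < 1) :
    volume {x ∈ Q₀.set | ENNReal.ofReal (K * lam) < Cube.maximal Q₀ F x ∧
        Cube.gstar Q₀ g x ≤ ENNReal.ofReal (γ * lam)}
      ≤ ENNReal.ofReal ((δ + γ) / (K - Θ)) *
        volume {x ∈ Q₀.set | ENNReal.ofReal lam < Cube.maximal Q₀ F x} := by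
  classical
  open GoodLambda in
  set A := {x ∈ Q₀.set | ENNReal.ofReal (K * lam) < Cube.maximal Q₀ F x ∧
      Cube.gstar Q₀ g x ≤ ENNReal.ofReal (γ * lam)} with hA
  rcases le_or_gt lam 0 with hlam0 | hlam0
  · -- degenerate case `lam ≤ 0`
    have hKlam : K * lam ≤ 0 := mul_nonpos_of_nonneg_of_nonpos (by linarith) hlam0
    have havg0 : Cube.avg Q₀ F = 0 :=
      le_antisymm (hlam.trans (by simp [ENNReal.ofReal_eq_zero.2 hlam0])) zero_le
    have hint0 : ∫⁻ x in Q₀.set, ENNReal.ofReal (F x) = 0 := by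
      have := GoodLambda.lintegral_eq_avg_mul Q₀ F
      rw [havg0, zero_mul] at this
      exact this
    have hAempty : A = (∅ : Set (Fin n → ℝ)) := by
      rw [hA]
      ext x
      simp only [Set.mem_sep_iff, Set.mem_empty_iff_false, iff_false, not_and]
      intro hxQ hmax
      exfalso
      rw [ENNReal.ofReal_eq_zero.2 hKlam] at hmax
      obtain ⟨k, m, ⟨hv, hxm⟩, havg⟩ := GoodLambda.lt_maximal_iff.1 hmax
      have h0 : Cube.avg (Q₀.dyadic k m) F = 0 := by
        rw [Cube.avg, ENNReal.div_eq_zero_iff]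
        left
        exact le_antisymm ((lintegral_mono_set
          (GoodLambda.dyadic_subset_base hv)).trans hint0.le) zero_le
      rw [h0] at havg
      exact (lt_irrefl _ havg).elim
    rw [hAempty]
    simp
  · -- main case `0 < lam`
    obtain ⟨S, hSval, hSdisj, hScov, hSanc⟩ := GoodLambda.selection Q₀
      (fun k m => ENNReal.ofReal lam < Cube.avg (Q₀.dyadic k m) F)
    have hK1 : 1 ≤ K := le_trans hΘ hK.le
    have hlamK : ENNReal.ofReal lam ≤ ENNReal.ofReal (K * lam) :=
      ENNReal.ofReal_le_ofReal (by nlinarith)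
    have hAcov : A ⊆ ⋃ p ∈ S, (Q₀.dyadic p.1 p.2).set := by
      intro x hx
      obtain ⟨hxQ, hmax, -⟩ := hx
      obtain ⟨k, m, ⟨hv, hxm⟩, havg⟩ := GoodLambda.lt_maximal_iff.1 hmax
      exact hScov ⟨hxQ, k, m, hv, hxm, lt_of_le_of_lt hlamK havg⟩
    have hS1 : ∀ p ∈ S, 1 ≤ p.1 := by
      intro p hp
      by_contra hcon
      obtain ⟨hv, hP⟩ := hSval p hp
      have hk0 : p.1 = 0 := by omega
      have hm0 : p.2 = fun _ => 0 := funext fun i => by have := hv i; rw [hk0] at this; omega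
      rw [hk0, hm0, GoodLambda.avg_congr_set GoodLambda.dyadic_zero_set] at hP
      exact absurd hlam (not_le.2 hP)
    have hper : ∀ p ∈ S, volume (A ∩ (Q₀.dyadic p.1 p.2).set)
        ≤ ENNReal.ofReal ((δ + γ) / (K - Θ)) * volume (Q₀.dyadic p.1 p.2).set := by
      intro p hp
      obtain ⟨j, hj⟩ : ∃ j, p.1 = j + 1 := ⟨p.1 - 1, by have := hS1 p hp; omega⟩
      obtain ⟨k, m⟩ := p
      simp only at hj
      subst hj
      have hv : ∀ i, m i < 2 ^ (j+1) := (hSval _ hp).1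
      set Q := Q₀.dyadic (j+1) m with hQ
      have hpar : Cube.avg (Q₀.dyadic j fun i => m i / 2) F ≤ ENNReal.ofReal lam := by
        have h := hSanc _ hp j (Nat.lt_succ_self j)
        have e : (fun i => m i / 2 ^ (j + 1 - j)) = fun i => m i / 2 := by
          funext i; norm_num
        rw [e] at h
        exact not_lt.1 h
      rcases Set.eq_empty_or_nonempty (A ∩ Q.set) with hAQ | ⟨x₀, hx₀A, hx₀Q⟩
      · rw [hAQ]; simp
      · have hg : ENNReal.ofReal (g Q) ≤ ENNReal.ofReal (γ * lam) :=
          le_trans (GoodLambda.le_gstar hv hx₀Q) hx₀A.2.2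
        have hΘ0 : (0:ℝ) ≤ Θ := by linarith
        have hHb : eLpNormEssSup (H Q) (volume.restrict Q.set)
            ≤ ENNReal.ofReal (Θ * lam) := by
          have h2' := h2 j m hv
          rw [eLpNorm_exponent_top] at h2'
          refine le_trans h2' ?_
          rw [ENNReal.ofReal_mul hΘ0]
          exact mul_le_mul_right hpar _
        have haeQ : ∀ᵐ x ∂(volume.restrict Q.set),
            ENNReal.ofReal (F x) ≤ ENNReal.ofReal (G Q x) + ENNReal.ofReal (Θ * lam) := by
          filter_upwards [h1 j m hv,
            MeasureTheory.ae_le_eLpNormEssSup (f := H Q) (μ := volume.restrict Q.set)]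
            with x hx1 hx2
          calc ENNReal.ofReal (F x) ≤ ENNReal.ofReal (G Q x + H Q x) :=
                ENNReal.ofReal_le_ofReal hx1
            _ = ENNReal.ofReal (G Q x) + ENNReal.ofReal (H Q x) :=
                ENNReal.ofReal_add (hGnn _ _) (hHnn _ _)
            _ ≤ ENNReal.ofReal (G Q x) + ENNReal.ofReal (Θ * lam) := by
                refine add_le_add le_rfl ?_
                rw [← Real.enorm_eq_ofReal (hHnn Q x)]
                exact hx2.trans hHb
        have hKΘlam : (0:ℝ) < (K - Θ) * lam := by nlinarith
        have hsplit : ENNReal.ofReal (K * lam)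
            = ENNReal.ofReal ((K - Θ) * lam) + ENNReal.ofReal (Θ * lam) := by
          rw [← ENNReal.ofReal_add hKΘlam.le (by nlinarith)]
          congr 1; ring
        have hsub : A ∩ Q.set ⊆ {x | ∃ k' m', (∀ i, m' i < 2 ^ k') ∧
            x ∈ (Q₀.dyadic k' m').set ∧ (Q₀.dyadic k' m').set ⊆ Q.set ∧
            ENNReal.ofReal ((K - Θ) * lam) < Cube.avg (Q₀.dyadic k' m') (G Q)} := by
          rintro x ⟨hxA, hxQ⟩
          obtain ⟨hxQ₀, hmax, -⟩ := hxA
          obtain ⟨k', m', ⟨hv', hx'⟩, havg'⟩ := GoodLambda.lt_maximal_iff.1 hmax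
          have hss : (Q₀.dyadic k' m').set ⊆ Q.set := by
            rcases le_or_gt (j+1) k' with hle | hlt
            · exact (GoodLambda.nested hle hxQ hx').1
            · exfalso
              obtain ⟨-, heqm⟩ := GoodLambda.nested hlt.le hx' hxQ
              have hanc := hSanc _ hp k' hlt
              rw [← heqm] at hanc
              exact hanc (lt_of_le_of_lt hlamK havg')
          refine ⟨k', m', hv', hx', hss, ?_⟩
          have haeR : ∀ᵐ x ∂(volume.restrict (Q₀.dyadic k' m').set),
              ENNReal.ofReal (F x) ≤ ENNReal.ofReal (G Q x) + ENNReal.ofReal (Θ * lam) :=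
            haeQ.filter_mono (ae_mono (Measure.restrict_mono hss le_rfl))
          have havgle : Cube.avg (Q₀.dyadic k' m') F
              ≤ Cube.avg (Q₀.dyadic k' m') (G Q) + ENNReal.ofReal (Θ * lam) :=
            GoodLambda.avg_le_avg_add_const _ haeR
          have hlt2 := lt_of_lt_of_le havg' havgle
          rw [hsplit] at hlt2
          exact (ENNReal.add_lt_add_iff_right ENNReal.ofReal_ne_top).1 hlt2
        have hw := GoodLambda.weak11 Q₀ Q.set (G Q) (ENNReal.ofReal ((K - Θ) * lam))
        have hGint : ∫⁻ x in Q.set, ENNReal.ofReal (G Q x)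
            ≤ ENNReal.ofReal ((δ + γ) * lam) * volume Q.set := by
          rw [GoodLambda.lintegral_eq_avg_mul]
          refine mul_le_mul_left ?_ _
          refine le_trans (h3 j m hv) ?_
          calc ENNReal.ofReal δ * Cube.avg (Q₀.dyadic j fun i => m i / 2) F
                + ENNReal.ofReal (g Q)
              ≤ ENNReal.ofReal δ * ENNReal.ofReal lam + ENNReal.ofReal (γ * lam) :=
                add_le_add (mul_le_mul_right hpar _) hg
            _ = ENNReal.ofReal ((δ + γ) * lam) := by
                rw [← ENNReal.ofReal_mul hδ0,
                  ← ENNReal.ofReal_add (by nlinarith) (by nlinarith)]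
                congr 1; ring
        have hmain : ENNReal.ofReal ((K - Θ) * lam) * volume (A ∩ Q.set)
            ≤ ENNReal.ofReal ((δ + γ) * lam) * volume Q.set :=
          le_trans (mul_le_mul_right (measure_mono hsub) _) (le_trans hw hGint)
        have ht0 : ENNReal.ofReal ((K - Θ) * lam) ≠ 0 := by
          simp only [ne_eq, ENNReal.ofReal_eq_zero, not_le]
          exact hKΘlam
        have hcoeff : ENNReal.ofReal ((δ + γ) * lam) / ENNReal.ofReal ((K - Θ) * lam)
            = ENNReal.ofReal ((δ + γ) / (K - Θ)) := by
          rw [← ENNReal.ofReal_div_of_pos hKΘlam]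
          congr 1
          rw [mul_div_mul_right _ _ (ne_of_gt hlam0)]
        calc volume (A ∩ Q.set)
            ≤ ENNReal.ofReal ((δ + γ) * lam) * volume Q.set
                / ENNReal.ofReal ((K - Θ) * lam) := by
              rw [ENNReal.le_div_iff_mul_le (Or.inl ht0) (Or.inl ENNReal.ofReal_ne_top)]
              rwa [mul_comm]
          _ = ENNReal.ofReal ((δ + γ) / (K - Θ)) * volume Q.set := by
              rw [mul_comm (ENNReal.ofReal ((δ + γ) * lam)) (volume Q.set), mul_div_assoc,
                hcoeff, mul_comm]
    have hΩsub : ∀ p ∈ S, (Q₀.dyadic p.1 p.2).set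
        ⊆ {x ∈ Q₀.set | ENNReal.ofReal lam < Cube.maximal Q₀ F x} := by
      intro p hp x hx
      exact ⟨GoodLambda.dyadic_subset_base (hSval p hp).1 hx,
        lt_of_lt_of_le (hSval p hp).2 (GoodLambda.avg_le_maximal (hSval p hp).1 hx)⟩
    have hA2 : A ⊆ ⋃ p ∈ S, A ∩ (Q₀.dyadic p.1 p.2).set := by
      have h := Set.subset_inter (Set.Subset.refl A) hAcov
      rwa [Set.inter_iUnion₂] at h
    calc volume A ≤ volume (⋃ p ∈ S, A ∩ (Q₀.dyadic p.1 p.2).set) := measure_mono hA2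
      _ ≤ ∑' p : S, volume (A ∩ (Q₀.dyadic (p : ℕ × (Fin n → ℕ)).1
            (p : ℕ × (Fin n → ℕ)).2).set) := measure_biUnion_le volume (Set.to_countable S) _
      _ ≤ ∑' p : S, ENNReal.ofReal ((δ + γ) / (K - Θ)) *
            volume (Q₀.dyadic (p : ℕ × (Fin n → ℕ)).1 (p : ℕ × (Fin n → ℕ)).2).set :=
          ENNReal.tsum_le_tsum fun p => hper p p.2
      _ = ENNReal.ofReal ((δ + γ) / (K - Θ)) *
            ∑' p : S, volume (Q₀.dyadic (p : ℕ × (Fin n → ℕ)).1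
              (p : ℕ × (Fin n → ℕ)).2).set := ENNReal.tsum_mul_left
      _ = ENNReal.ofReal ((δ + γ) / (K - Θ)) *
            volume (⋃ p ∈ S, (Q₀.dyadic p.1 p.2).set) := by
          rw [measure_biUnion (Set.to_countable S) hSdisj
            fun p _ => GoodLambda.measurableSet_cube _]
      _ ≤ ENNReal.ofReal ((δ + γ) / (K - Θ)) *
            volume {x ∈ Q₀.set | ENNReal.ofReal lam < Cube.maximal Q₀ F x} :=
          mul_le_mul_right (measure_mono (Set.iUnion₂_subset hΩsub)) _
end

section
/- Fix a cube Q_0 ⊂ ℝ^n and let F ∈ L^1(Q_0) be nonnegative. Assume there are constants Θ ≥ 1 and 0 ≤ δ < 1/2 such that for every Q ∈ D(Q_0)\{Q_0} there exist nonnegative measurable functions H^Q, G^Q and a constant g^Q ≥ 0 satisfying: (i) F ≤ G^Q + H^Q a.e. on Q; (ii) ‖H^Q‖_{L^∞(Q)} ≤ Θ · (average of F over Q̂); (iii) (average of G^Q over Q) ≤ δ · (average of F over Q̂) + g^Q. Define G*_{Q_0}(x) = sup{ g^Q : Q ∈ D(Q_0), x ∈ Q }. Then for every p with 1 < p < 1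 + log(1/(2δ))/log(2Θ) (any p > 1 if δ = 0) there is a constant C depending only on p, Θ, δ such that ‖F‖_{L^{p,∞},Q_0} ≤ ‖M_{Q_0}F‖_{L^{p,∞},Q_0} ≤ C‖G*_{Q_0}‖_{L^{p,∞},Q_0} + C · (average of F over Q_0). -/
open MeasureTheory Filter
open scoped ENNReal NNReal Topology

namespace GLaux

variable {n : ℕ} (Q₀ : Cube n)

lemma cube_set_eq (Q : Cube n) :
    Q.set = Set.univ.pi fun i => Set.Ico (Q.corner i) (Q.corner i + Q.side) := by
  ext x; simp [Cube.set, Set.mem_pi]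

lemma measurableSet_cube (Q : Cube n) : MeasurableSet Q.set := by
  rw [cube_set_eq]; exact MeasurableSet.univ_pi fun i => measurableSet_Ico

lemma volume_cube (Q : Cube n) : volume Q.set = ENNReal.ofReal Q.side ^ n := by
  rw [cube_set_eq, volume_pi_pi]
  simp [Real.volume_Ico]

lemma volume_cube_pos (Q : Cube n) : 0 < volume Q.set := by
  rw [volume_cube]
  exact ENNReal.pow_pos (by simp [ENNReal.ofReal_pos, Q.side_pos]) n

lemma volume_cube_ne_top (Q : Cube n) : volume Q.set ≠ ⊤ := by
  rw [volume_cube]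
  exact (ENNReal.pow_ne_top ENNReal.ofReal_ne_top)

/-- coordinatewise index of the generation-`k` dyadic cube containing `x`. -/
noncomputable def idx (k : ℕ) (x : Fin n → ℝ) (i : Fin n) : ℕ :=
  ⌊(x i - Q₀.corner i) / (Q₀.side / 2 ^ k)⌋₊

lemma mem_dyadic_iff {k : ℕ} {m : Fin n → ℕ} {x : Fin n → ℝ} :
    x ∈ (Q₀.dyadic k m).set ↔ ∀ i, Q₀.corner i ≤ x i ∧ idx Q₀ k x i = m i := by
  have hh : (0:ℝ) < Q₀.side / 2 ^ k := div_pos Q₀.side_pos (by positivity)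
  constructor
  · intro hx i
    obtain ⟨h1, h2⟩ := hx i
    simp only [Cube.dyadic] at h1 h2
    have hm : (m i : ℝ) ≤ (x i - Q₀.corner i) / (Q₀.side / 2 ^ k) := by
      rw [le_div_iff₀ hh]; linarith
    have hm' : (x i - Q₀.corner i) / (Q₀.side / 2 ^ k) < (m i : ℝ) + 1 := by
      rw [div_lt_iff₀ hh]; ring_nf; ring_nf at h2; linarith
    have ht : (0:ℝ) ≤ (x i - Q₀.corner i) / (Q₀.side / 2 ^ k) :=
      le_trans (by positivity) hm
    have hc : Q₀.corner i ≤ x i := by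
      have : (0:ℝ) ≤ Q₀.side / 2 ^ k * (m i : ℝ) := by positivity
      linarith
    refine ⟨hc, ?_⟩
    rw [idx, Nat.floor_eq_iff ht]
    exact ⟨hm, by exact_mod_cast hm'⟩
  · intro hx
    intro i
    obtain ⟨hc, hi⟩ := hx i
    have ht : (0:ℝ) ≤ (x i - Q₀.corner i) / (Q₀.side / 2 ^ k) := by
      apply div_nonneg (by linarith) hh.le
    rw [idx, Nat.floor_eq_iff ht] at hi
    obtain ⟨hm, hm'⟩ := hi
    rw [le_div_iff₀ hh] at hm
    rw [div_lt_iff₀ hh] at hm'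
    simp only [Cube.dyadic]
    push_cast at hm hm'
    constructor
    · linarith
    · nlinarith


lemma idx_div (k e : ℕ) (x : Fin n → ℝ) (i : Fin n) :
    idx Q₀ (k + e) x i / 2 ^ e = idx Q₀ k x i := by
  rw [idx, idx, ← Nat.floor_div_natCast]
  congr 1
  have h1 : (Q₀.side : ℝ) ≠ 0 := ne_of_gt Q₀.side_pos
  field_simp
  push_cast
  ring

lemma mem_anc {k e : ℕ} {m : Fin n → ℕ} {x : Fin n → ℝ}
    (hx : x ∈ (Q₀.dyadic (k + e) m).set) :
    x ∈ (Q₀.dyadic k fun i => m i / 2 ^ e).set := by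
  rw [mem_dyadic_iff] at hx ⊢
  intro i
  refine ⟨(hx i).1, ?_⟩
  rw [← idx_div Q₀ k e, (hx i).2]

lemma idx_eq {k : ℕ} {m : Fin n → ℕ} {x : Fin n → ℝ} (hx : x ∈ (Q₀.dyadic k m).set) :
    idx Q₀ k x = m :=
  funext fun i => ((mem_dyadic_iff Q₀).mp hx i).2

lemma mem_unique {k : ℕ} {m m' : Fin n → ℕ} {x : Fin n → ℝ}
    (h : x ∈ (Q₀.dyadic k m).set) (h' : x ∈ (Q₀.dyadic k m').set) : m = m' := by
  rw [← idx_eq Q₀ h, idx_eq Q₀ h']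

lemma dyadic_zero_set : (Q₀.dyadic 0 fun _ => 0).set = Q₀.set := by
  ext x
  simp [Cube.set, Cube.dyadic]

lemma mem_idx {k : ℕ} {x : Fin n → ℝ} (hx : x ∈ Q₀.set) :
    x ∈ (Q₀.dyadic k (idx Q₀ k x)).set :=
  (mem_dyadic_iff Q₀).mpr fun i => ⟨(hx i).1, rfl⟩

lemma idx_valid {k : ℕ} {x : Fin n → ℝ} (hx : x ∈ Q₀.set) (i : Fin n) :
    idx Q₀ k x i < 2 ^ k := by
  have hh : (0:ℝ) < Q₀.side / 2 ^ k := div_pos Q₀.side_pos (by positivity)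
  rw [idx, Nat.floor_lt (div_nonneg (by linarith [(hx i).1]) hh.le)]
  rw [div_lt_iff₀ hh]
  push_cast
  have := (hx i).2
  have h2 : (0:ℝ) < 2 ^ k := by positivity
  have h3 : (2:ℝ) ^ k * (Q₀.side / 2 ^ k) = Q₀.side := by field_simp
  linarith

lemma subset_base {k : ℕ} {m : Fin n → ℕ} (hm : ∀ i, m i < 2 ^ k) :
    (Q₀.dyadic k m).set ⊆ Q₀.set := by
  intro x hx
  have hh : (0:ℝ) < Q₀.side / 2 ^ k := div_pos Q₀.side_pos (by positivity)
  intro i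
  obtain ⟨h1, h2⟩ := hx i
  simp only [Cube.dyadic] at h1 h2
  have hmi : (m i : ℝ) + 1 ≤ 2 ^ k := by exact_mod_cast hm i
  constructor
  · have : (0:ℝ) ≤ Q₀.side / 2 ^ k * (m i : ℝ) := by positivity
    linarith
  · have h3 : Q₀.side / 2 ^ k * ((m i : ℝ) + 1) ≤ Q₀.side / 2 ^ k * 2 ^ k := by
      exact mul_le_mul_of_nonneg_left hmi hh.le
    have h4 : Q₀.side / 2 ^ k * (2:ℝ) ^ k = Q₀.side := by field_simp
    nlinarith

lemma subset_anc {k e : ℕ} {m : Fin n → ℕ} :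
    (Q₀.dyadic (k + e) m).set ⊆ (Q₀.dyadic k fun i => m i / 2 ^ e).set :=
  fun _ hx => mem_anc Q₀ hx


lemma measurable_aux (c : Cube n) (v : ℝ≥0∞) (P : Prop) :
    Measurable fun x => ⨆ (_ : P ∧ x ∈ c.set), v := by
  by_cases h : P
  · have : (fun x => ⨆ (_ : P ∧ x ∈ c.set), v)
        = c.set.indicator (fun _ => v) := by
      ext x
      by_cases hx : x ∈ c.set <;> simp [hx, h, Set.indicator_apply]
    rw [this]
    exact measurable_const.indicator (measurableSet_cube _)
  · have : (fun x => ⨆ (_ : P ∧ x ∈ c.set), v) = fun _ => 0 := by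
      ext x; simp [h]
    rw [this]; exact measurable_const

lemma measurable_maximal (F : (Fin n → ℝ) → ℝ) : Measurable (Q₀.maximal F) :=
  Measurable.iSup fun k => Measurable.iSup fun m => measurable_aux _ _ _

lemma measurable_gstar (g : Cube n → ℝ) : Measurable (Q₀.gstar g) :=
  Measurable.iSup fun k => Measurable.iSup fun m => measurable_aux _ _ _

lemma lt_maximal_iff {F : (Fin n → ℝ) → ℝ} {x : Fin n → ℝ} {l : ℝ≥0∞} :
    l < Q₀.maximal F x ↔ ∃ k m, (∀ i, m i < 2 ^ k) ∧ x ∈ (Q₀.dyadic k m).set ∧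
      l < Cube.avg (Q₀.dyadic k m) F := by
  simp only [Cube.maximal, lt_iSup_iff]
  tauto

lemma le_gstar {g : Cube n → ℝ} {x : Fin n → ℝ} {k : ℕ} {m : Fin n → ℕ}
    (hm : ∀ i, m i < 2 ^ k) (hx : x ∈ (Q₀.dyadic k m).set) :
    ENNReal.ofReal (g (Q₀.dyadic k m)) ≤ Q₀.gstar g x := by
  rw [Cube.gstar]
  refine le_iSup_of_le k (le_iSup_of_le m ?_)
  exact le_iSup_of_le ⟨hm, hx⟩ le_rfl

lemma le_maximal {F : (Fin n → ℝ) → ℝ} {x : Fin n → ℝ} {k : ℕ} {m : Fin n → ℕ}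
    (hm : ∀ i, m i < 2 ^ k) (hx : x ∈ (Q₀.dyadic k m).set) :
    Cube.avg (Q₀.dyadic k m) F ≤ Q₀.maximal F x := by
  rw [Cube.maximal]
  refine le_iSup_of_le k (le_iSup_of_le m ?_)
  exact le_iSup_of_le ⟨hm, hx⟩ le_rfl

lemma lt_avg_iff {Q : Cube n} {F : (Fin n → ℝ) → ℝ} {l : ℝ≥0∞} :
    l < Cube.avg Q F ↔ l * volume Q.set < ∫⁻ x in Q.set, ENNReal.ofReal (F x) := by
  rw [Cube.avg, ENNReal.lt_div_iff_mul_lt (Or.inl (volume_cube_pos Q).ne')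
    (Or.inl (volume_cube_ne_top Q))]

lemma avg_le_iff {Q : Cube n} {F : (Fin n → ℝ) → ℝ} {l : ℝ≥0∞} :
    Cube.avg Q F ≤ l ↔ (∫⁻ x in Q.set, ENNReal.ofReal (F x)) ≤ l * volume Q.set := by
  rw [← not_lt, ← not_lt, lt_avg_iff]

/-- Stopping cubes inside root `(k₀, m₀)` at level `l` for the function `f`. -/
def Stop (k₀ : ℕ) (m₀ : Fin n → ℕ) (f : (Fin n → ℝ) → ℝ) (l : ℝ≥0∞) :
    Set (ℕ × (Fin n → ℕ)) :=
  {p | (∀ i, p.2 i < 2 ^ (k₀ + p.1)) ∧ (∀ i, p.2 i / 2 ^ p.1 = m₀ i) ∧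
       l < Cube.avg (Q₀.dyadic (k₀ + p.1) p.2) f ∧
       ∀ j < p.1, Cube.avg (Q₀.dyadic (k₀ + j) fun i => p.2 i / 2 ^ (p.1 - j)) f ≤ l}

/-- The "bad set" of the root cube at level `l`. -/
def Bad (k₀ : ℕ) (m₀ : Fin n → ℕ) (f : (Fin n → ℝ) → ℝ) (l : ℝ≥0∞) :
    Set (Fin n → ℝ) :=
  {x ∈ (Q₀.dyadic k₀ m₀).set | ∃ j m, (∀ i, m i < 2 ^ (k₀ + j)) ∧
    x ∈ (Q₀.dyadic (k₀ + j) m).set ∧ l < Cube.avg (Q₀.dyadic (k₀ + j) m) f}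

variable {Q₀}

open Classical in
lemma bad_eq_biUnion {k₀ : ℕ} {m₀ : Fin n → ℕ} (hm₀ : ∀ i, m₀ i < 2 ^ k₀)
    {f : (Fin n → ℝ) → ℝ} {l : ℝ≥0∞} :
    Bad Q₀ k₀ m₀ f l
      = ⋃ p ∈ Stop Q₀ k₀ m₀ f l, (Q₀.dyadic (k₀ + p.1) p.2).set := by
  apply Set.Subset.antisymm
  · rintro x ⟨hroot, j₁, m₁, hv₁, hx₁, ha₁⟩
    have hxQ : x ∈ Q₀.set := subset_base Q₀ hm₀ hroot
    have hP : ∃ j, l < Cube.avg (Q₀.dyadic (k₀ + j) (idx Q₀ (k₀ + j) x)) f := by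
      refine ⟨j₁, ?_⟩
      rwa [idx_eq Q₀ hx₁]
    set j := Nat.find hP with hj
    have hstop : ((j, idx Q₀ (k₀ + j) x) : ℕ × (Fin n → ℕ)) ∈ Stop Q₀ k₀ m₀ f l := by
      refine ⟨fun i => idx_valid Q₀ hxQ i, ?_, Nat.find_spec hP, ?_⟩
      · intro i
        have h1 : idx Q₀ (k₀ + j) x i / 2 ^ j = idx Q₀ k₀ x i := idx_div Q₀ k₀ j x i
        rw [h1, idx_eq Q₀ hroot]
      · intro j' hj'
        have heq : ∀ i, idx Q₀ (k₀ + j) x i / 2 ^ (j - j') = idx Q₀ (k₀ + j') x i := by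
          intro i
          have := idx_div Q₀ (k₀ + j') (j - j') x i
          rwa [show k₀ + j' + (j - j') = k₀ + j by omega] at this
        have hmin := Nat.find_min hP hj'
        rw [not_lt] at hmin
        show Cube.avg (Q₀.dyadic (k₀ + j') fun i => idx Q₀ (k₀ + j) x i / 2 ^ (j - j')) f ≤ l
        rw [funext heq]
        exact hmin
    exact Set.mem_biUnion hstop (mem_idx Q₀ hxQ)
  · rintro x hx
    rw [Set.mem_iUnion₂] at hx
    obtain ⟨p, hp, hxp⟩ := hx
    refine ⟨?_, p.1, p.2, hp.1, hxp, hp.2.2.1⟩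
    have := mem_anc Q₀ (k := k₀) (e := p.1) hxp
    have hanc : (fun i => p.2 i / 2 ^ p.1) = m₀ := funext hp.2.1
    rwa [hanc] at this

lemma stop_pairwiseDisjoint {k₀ : ℕ} {m₀ : Fin n → ℕ} {f : (Fin n → ℝ) → ℝ} {l : ℝ≥0∞} :
    (Stop Q₀ k₀ m₀ f l).PairwiseDisjoint
      (fun p => (Q₀.dyadic (k₀ + p.1) p.2).set) := by
  have key : ∀ p ∈ Stop Q₀ k₀ m₀ f l, ∀ q ∈ Stop Q₀ k₀ m₀ f l, p.1 ≤ q.1 → p ≠ q →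
      Disjoint (Q₀.dyadic (k₀ + p.1) p.2).set (Q₀.dyadic (k₀ + q.1) q.2).set := by
    intro p hp q hq hle hne
    rw [Set.disjoint_left]
    intro x hxp hxq
    have hanc : x ∈ (Q₀.dyadic (k₀ + p.1) fun i => q.2 i / 2 ^ (q.1 - p.1)).set := by
      have := mem_anc Q₀ (k := k₀ + p.1) (e := q.1 - p.1)
        (m := q.2) (x := x) ?_
      · exact this
      · rwa [show k₀ + p.1 + (q.1 - p.1) = k₀ + q.1 by omega]
    have heq := mem_unique Q₀ hxp hanc
    rcases eq_or_lt_of_le hle with h | h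
    · apply hne
      have : p.2 = q.2 := by
        rw [heq]
        funext i
        rw [show q.1 - p.1 = 0 by omega]
        simp
      exact Prod.ext (h) this
    · have hmin := hq.2.2.2 p.1 h
      rw [← heq] at hmin
      exact absurd hp.2.2.1 (not_lt.mpr hmin)
  intro p hp q hq hne
  rcases le_total p.1 q.1 with h | h
  · exact key p hp q hq h hne
  · exact (key q hq p hp h hne.symm).symm

lemma measurableSet_bad {k₀ : ℕ} {m₀ : Fin n → ℕ} (hm₀ : ∀ i, m₀ i < 2 ^ k₀)
    {f : (Fin n → ℝ) → ℝ} {l : ℝ≥0∞} : MeasurableSet (Bad Q₀ k₀ m₀ f l) := by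
  rw [bad_eq_biUnion hm₀]
  exact MeasurableSet.biUnion (Set.to_countable _) fun p _ => measurableSet_cube _

lemma volume_bad_eq {k₀ : ℕ} {m₀ : Fin n → ℕ} (hm₀ : ∀ i, m₀ i < 2 ^ k₀)
    {f : (Fin n → ℝ) → ℝ} {l : ℝ≥0∞} :
    volume (Bad Q₀ k₀ m₀ f l)
      = ∑' p : Stop Q₀ k₀ m₀ f l, volume (Q₀.dyadic (k₀ + (p : ℕ × (Fin n → ℕ)).1) (p : ℕ × (Fin n → ℕ)).2).set := by
  rw [bad_eq_biUnion hm₀]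
  exact measure_biUnion (Set.to_countable _) stop_pairwiseDisjoint
    fun p _ => measurableSet_cube _

/-- The Calderón–Zygmund weak (1,1) bound for the bad set. -/
lemma cz_weak {k₀ : ℕ} {m₀ : Fin n → ℕ} (hm₀ : ∀ i, m₀ i < 2 ^ k₀)
    {f : (Fin n → ℝ) → ℝ} {l : ℝ≥0∞} :
    l * volume (Bad Q₀ k₀ m₀ f l)
      ≤ ∫⁻ x in (Q₀.dyadic k₀ m₀).set, ENNReal.ofReal (f x) := by
  have hcnt : (Stop Q₀ k₀ m₀ f l).Countable := Set.to_countable _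
  haveI := hcnt.to_subtype
  rw [volume_bad_eq hm₀, ← ENNReal.tsum_mul_left]
  have hdisj : Pairwise (Function.onFun Disjoint
      (fun p : Stop Q₀ k₀ m₀ f l => (Q₀.dyadic (k₀ + (p : ℕ × (Fin n → ℕ)).1) (p : ℕ × (Fin n → ℕ)).2).set)) := by
    intro p q hne
    exact stop_pairwiseDisjoint p.2 q.2 (fun h => hne (Subtype.ext h))
  calc ∑' p : Stop Q₀ k₀ m₀ f l, l * volume (Q₀.dyadic (k₀ + (p : ℕ × (Fin n → ℕ)).1) (p : ℕ × (Fin n → ℕ)).2).set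
      ≤ ∑' p : Stop Q₀ k₀ m₀ f l, ∫⁻ x in (Q₀.dyadic (k₀ + (p : ℕ × (Fin n → ℕ)).1) (p : ℕ × (Fin n → ℕ)).2).set, ENNReal.ofReal (f x) := by
        refine ENNReal.tsum_le_tsum fun p => ?_
        exact le_of_lt (lt_avg_iff.mp p.2.2.2.1)
    _ = ∫⁻ x in ⋃ p : Stop Q₀ k₀ m₀ f l, (Q₀.dyadic (k₀ + (p : ℕ × (Fin n → ℕ)).1) (p : ℕ × (Fin n → ℕ)).2).set, ENNReal.ofReal (f x) := by
        rw [lintegral_iUnion (fun p => measurableSet_cube _) hdisj]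
    _ ≤ ∫⁻ x in (Q₀.dyadic k₀ m₀).set, ENNReal.ofReal (f x) := by
        apply lintegral_mono_set
        rw [Set.iUnion_subset_iff]
        intro p x hx
        have h3 := mem_anc Q₀ (k := k₀) hx
        have hanc : (fun i => (p : ℕ × (Fin n → ℕ)).2 i / 2 ^ (p : ℕ × (Fin n → ℕ)).1) = m₀ :=
          funext p.2.2.1
        rwa [hanc] at h3

lemma avg_congr {Q Q' : Cube n} (h : Q.set = Q'.set) (f : (Fin n → ℝ) → ℝ) :
    Cube.avg Q f = Cube.avg Q' f := by
  rw [Cube.avg, Cube.avg, h]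

lemma bad_zero_eq (f : (Fin n → ℝ) → ℝ) (l : ℝ≥0∞) :
    Bad Q₀ 0 (fun _ => 0) f l = {x ∈ Q₀.set | l < Q₀.maximal f x} := by
  ext x
  simp only [Bad, Set.mem_setOf_eq, dyadic_zero_set, lt_maximal_iff, zero_add]

/-- Comparison of averages using the decomposition `F ≤ G + H`. -/
lemma avg_le_decomp {F : (Fin n → ℝ) → ℝ} {Qp : Cube n} {Gp Hp : (Fin n → ℝ) → ℝ}
    {R : Cube n} {C : ℝ≥0∞}
    (hGm : Measurable Gp) (hGnn : ∀ x, 0 ≤ Gp x) (hHnn : ∀ x, 0 ≤ Hp x)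
    (hsub : R.set ⊆ Qp.set)
    (hae : ∀ᵐ x ∂(volume.restrict Qp.set), F x ≤ Gp x + Hp x)
    (hH : eLpNorm Hp ⊤ (volume.restrict Qp.set) ≤ C) :
    Cube.avg R F ≤ Cube.avg R Gp + C := by
  have haeR : ∀ᵐ x ∂(volume.restrict R.set), F x ≤ Gp x + Hp x :=
    ae_restrict_of_ae_restrict_of_subset hsub hae
  have hHb : ∀ᵐ x ∂(volume.restrict Qp.set), ENNReal.ofReal (Hp x) ≤ C := by
    have := ae_le_eLpNormEssSup (f := Hp) (μ := volume.restrict Qp.set)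
    rw [eLpNorm_exponent_top] at hH
    filter_upwards [this] with x hx
    exact le_trans (le_trans (Real.ofReal_le_enorm _) hx) hH
  have hHbR : ∀ᵐ x ∂(volume.restrict R.set), ENNReal.ofReal (Hp x) ≤ C :=
    ae_restrict_of_ae_restrict_of_subset hsub hHb
  have key : (∫⁻ x in R.set, ENNReal.ofReal (F x))
      ≤ (∫⁻ x in R.set, ENNReal.ofReal (Gp x)) + C * volume R.set := by
    calc (∫⁻ x in R.set, ENNReal.ofReal (F x))
        ≤ ∫⁻ x in R.set, (ENNReal.ofReal (Gp x) + ENNReal.ofReal (Hp x)) := by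
          apply lintegral_mono_ae
          filter_upwards [haeR] with x hx
          calc ENNReal.ofReal (F x) ≤ ENNReal.ofReal (Gp x + Hp x) :=
                ENNReal.ofReal_le_ofReal hx
            _ = ENNReal.ofReal (Gp x) + ENNReal.ofReal (Hp x) :=
                ENNReal.ofReal_add (hGnn x) (hHnn x)
      _ = (∫⁻ x in R.set, ENNReal.ofReal (Gp x)) + ∫⁻ x in R.set, ENNReal.ofReal (Hp x) :=
          lintegral_add_left hGm.ennreal_ofReal _
      _ ≤ (∫⁻ x in R.set, ENNReal.ofReal (Gp x)) + C * volume R.set := by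
          gcongr
          calc (∫⁻ x in R.set, ENNReal.ofReal (Hp x)) ≤ ∫⁻ _ in R.set, C :=
                lintegral_mono_ae hHbR
            _ = C * volume R.set := setLIntegral_const _ _
  have hv0 := (volume_cube_pos R).ne'
  have hvt := volume_cube_ne_top R
  calc Cube.avg R F = (∫⁻ x in R.set, ENNReal.ofReal (F x)) / volume R.set := rfl
    _ ≤ ((∫⁻ x in R.set, ENNReal.ofReal (Gp x)) + C * volume R.set) / volume R.set :=
        ENNReal.div_le_div_right key _
    _ = Cube.avg R Gp + C := by
        rw [ENNReal.add_div, Cube.avg]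
        congr 1
        rw [mul_div_assoc, ENNReal.div_self hv0 hvt, mul_one]

lemma measurableSet_sep_maximal (F : (Fin n → ℝ) → ℝ) (l : ℝ≥0∞) :
    MeasurableSet {x ∈ Q₀.set | l < Q₀.maximal F x} :=
  (measurableSet_cube Q₀).inter (measurable_gstar Q₀ (g := fun _ => 0) |> fun _ => by
    exact (measurable_maximal Q₀ F) measurableSet_Ioi)

lemma measurableSet_sep_gstar (g : Cube n → ℝ) (l : ℝ≥0∞) :
    MeasurableSet {x ∈ Q₀.set | l < Q₀.gstar g x} :=
  (measurableSet_cube Q₀).inter ((measurable_gstar Q₀ g) measurableSet_Ioi)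

/-- The good-lambda distributional inequality. -/
lemma good_lambda_step
    {F : (Fin n → ℝ) → ℝ} {Θ δ γ : ℝ}
    {H G : Cube n → (Fin n → ℝ) → ℝ} {g : Cube n → ℝ}
    (hΘ : 1 ≤ Θ) (hδ0 : 0 ≤ δ) (hγ0 : 0 < γ) (hδγΘ : δ + γ ≤ Θ)
    (hGmeas : ∀ Q, Measurable (G Q))
    (hGnn : ∀ Q x, 0 ≤ G Q x) (hHnn : ∀ Q x, 0 ≤ H Q x)
    (h1 : ∀ (k : ℕ) (m : Fin n → ℕ), (∀ i, m i < 2 ^ (k + 1)) →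
      ∀ᵐ x ∂(volume.restrict (Q₀.dyadic (k + 1) m).set),
        F x ≤ G (Q₀.dyadic (k + 1) m) x + H (Q₀.dyadic (k + 1) m) x)
    (h2 : ∀ (k : ℕ) (m : Fin n → ℕ), (∀ i, m i < 2 ^ (k + 1)) →
      eLpNorm (H (Q₀.dyadic (k + 1) m)) ⊤ (volume.restrict (Q₀.dyadic (k + 1) m).set)
        ≤ ENNReal.ofReal Θ * Cube.avg (Q₀.dyadic k (fun i => m i / 2)) F)
    (h3 : ∀ (k : ℕ) (m : Fin n → ℕ), (∀ i, m i < 2 ^ (k + 1)) →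
      Cube.avg (Q₀.dyadic (k + 1) m) (G (Q₀.dyadic (k + 1) m))
        ≤ ENNReal.ofReal δ * Cube.avg (Q₀.dyadic k (fun i => m i / 2)) F
          + ENNReal.ofReal (g (Q₀.dyadic (k + 1) m)))
    {t : ℝ} (ht : 0 < t) (ha : Cube.avg Q₀ F ≤ ENNReal.ofReal t) :
    volume {x ∈ Q₀.set | ENNReal.ofReal (2 * Θ * t) < Q₀.maximal F x}
      ≤ ENNReal.ofReal ((δ + γ) / Θ)
          * volume {x ∈ Q₀.set | ENNReal.ofReal t < Q₀.maximal F x}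
        + volume {x ∈ Q₀.set | ENNReal.ofReal (γ * t) < Q₀.gstar g x} := by
  classical
  set z : Fin n → ℕ := fun _ => 0 with hzdef
  have hm₀ : ∀ i, z i < 2 ^ 0 := fun i => by simp [hzdef]
  set l1 := ENNReal.ofReal t with hl1def
  set l2 := ENNReal.ofReal (2 * Θ * t) with hl2def
  set l3 := ENNReal.ofReal (γ * t) with hl3def
  set Gset := {x ∈ Q₀.set | l3 < Q₀.gstar g x} with hGsetdef
  have hl12 : l1 < l2 := by
    rw [hl1def, hl2def, ENNReal.ofReal_lt_ofReal_iff (by nlinarith)]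
    nlinarith
  have hBadA : {x ∈ Q₀.set | l2 < Q₀.maximal F x} = Bad Q₀ 0 z F l2 :=
    (bad_zero_eq F l2).symm
  have hBadB : {x ∈ Q₀.set | l1 < Q₀.maximal F x} = Bad Q₀ 0 z F l1 :=
    (bad_zero_eq F l1).symm
  have hAB : Bad Q₀ 0 z F l2 ⊆ Bad Q₀ 0 z F l1 := by
    rintro x ⟨hr, j, m, hv, hm, hlt⟩
    exact ⟨hr, j, m, hv, hm, lt_trans hl12 hlt⟩
  -- the key estimate on each stopping cube
  have key : ∀ p ∈ Stop Q₀ 0 z F l1,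
      volume (Bad Q₀ 0 z F l2 ∩ (Q₀.dyadic (0 + p.1) p.2).set)
        ≤ ENNReal.ofReal ((δ + γ) / Θ) * volume (Q₀.dyadic (0 + p.1) p.2).set
          + volume (Gset ∩ (Q₀.dyadic (0 + p.1) p.2).set) := by
    rintro p ⟨hval, hanc0, hgt, hmin⟩
    obtain ⟨k, hk⟩ : ∃ k, p.1 = k + 1 := by
      rcases Nat.eq_zero_or_eq_succ_pred p.1 with h0 | hsucc
      · exfalso
        have hmz : p.2 = z := funext fun i => by
          have := hanc0 i
          simpa [h0] using this
        rw [h0, hmz] at hgt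
        have : Cube.avg (Q₀.dyadic (0 + 0) z) F = Cube.avg Q₀ F :=
          avg_congr (by rw [show (0 + 0 : ℕ) = 0 from rfl]; exact dyadic_zero_set Q₀) F
        rw [this] at hgt
        exact absurd ha (not_le.mpr hgt)
      · exact ⟨p.1 - 1, hsucc⟩
    set m := p.2 with hmdef
    have hval' : ∀ i, m i < 2 ^ (k + 1) := by
      intro i; have := hval i; rwa [hk, zero_add] at this
    have hgt' : l1 < Cube.avg (Q₀.dyadic (k + 1) m) F := by
      have := hgt; rwa [hk, zero_add] at this
    have hpar : Cube.avg (Q₀.dyadic k fun i => m i / 2) F ≤ l1 := by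
      have h := hmin k (by omega)
      rw [hk] at h
      have e1 : k + 1 - k = 1 := by omega
      rw [e1, zero_add, pow_one] at h
      exact h
    set Qp := Q₀.dyadic (k + 1) m with hQpdef
    have hgoal : (Q₀.dyadic (0 + p.1) p.2).set = Qp.set := by rw [hk, zero_add]
    rw [hgoal]
    by_cases hg : g Qp ≤ γ * t
    · -- good cube: use the decomposition and weak (1,1) for G
      have hH2 : eLpNorm (H Qp) ⊤ (volume.restrict Qp.set) ≤ ENNReal.ofReal Θ * l1 :=
        le_trans (h2 k m hval') (mul_le_mul_right hpar _)
      have hincl : Bad Q₀ 0 z F l2 ∩ Qp.set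
          ⊆ Bad Q₀ (k + 1) m (G Qp) (ENNReal.ofReal (Θ * t)) := by
        rintro x ⟨⟨hxQ, j₁, m₁, hv₁, hx₁, ha₁⟩, hxDp⟩
        rw [zero_add] at hv₁ hx₁ ha₁
        by_cases hj : j₁ < k + 1
        · exfalso
          have hxa : x ∈ (Q₀.dyadic j₁ fun i => m i / 2 ^ (k + 1 - j₁)).set := by
            have hmem : x ∈ (Q₀.dyadic (j₁ + (k + 1 - j₁)) m).set := by
              rw [show j₁ + (k + 1 - j₁) = k + 1 by omega]; exact hxDp
            exact mem_anc Q₀ hmem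
          have heqm := mem_unique Q₀ hx₁ hxa
          have hm2 := hmin j₁ (by omega)
          rw [hk, zero_add] at hm2
          rw [← heqm] at hm2
          exact absurd (lt_trans hl12 ha₁) (not_lt.mpr hm2)
        · push_neg at hj
          set e := j₁ - (k + 1) with hedef
          have hxmem : x ∈ (Q₀.dyadic ((k + 1) + e) m₁).set := by
            rw [show (k + 1) + e = j₁ by omega]; exact hx₁
          have hxa : x ∈ (Q₀.dyadic (k + 1) fun i => m₁ i / 2 ^ e).set := mem_anc Q₀ hxmem
          have hme : (fun i => m₁ i / 2 ^ e) = m := mem_unique Q₀ hxa hxDp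
          have hRsub : (Q₀.dyadic j₁ m₁).set ⊆ Qp.set := by
            intro y hy
            have hy' : y ∈ (Q₀.dyadic ((k + 1) + e) m₁).set := by
              rw [show (k + 1) + e = j₁ by omega]; exact hy
            have := mem_anc Q₀ hy'
            rwa [hme] at this
          refine ⟨hxDp, e, m₁, ?_, ?_, ?_⟩
          · intro i; have := hv₁ i; rwa [show j₁ = (k + 1) + e by omega] at this
          · exact hxmem
          · -- the average of G over the witness cube is large
            by_contra hcon
            push_neg at hcon
            have hdec : Cube.avg (Q₀.dyadic j₁ m₁) F
                ≤ Cube.avg (Q₀.dyadic j₁ m₁) (G Qp) + ENNReal.ofReal Θ * l1 :=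
              avg_le_decomp (hGmeas Qp) (fun y => hGnn Qp y) (fun y => hHnn Qp y)
                hRsub (h1 k m hval') hH2
            have hcon' : Cube.avg (Q₀.dyadic ((k+1)+e) m₁) (G Qp)
                ≤ ENNReal.ofReal (Θ * t) := hcon
            have hcon'' : Cube.avg (Q₀.dyadic j₁ m₁) (G Qp) ≤ ENNReal.ofReal (Θ * t) := by
              rwa [show (k + 1) + e = j₁ by omega] at hcon'
            have : Cube.avg (Q₀.dyadic j₁ m₁) F ≤ l2 := by
              refine le_trans hdec ?_
              calc Cube.avg (Q₀.dyadic j₁ m₁) (G Qp) + ENNReal.ofReal Θ * l1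
                  ≤ ENNReal.ofReal (Θ * t) + ENNReal.ofReal Θ * l1 :=
                    add_le_add_left hcon'' _
                _ = l2 := by
                    rw [hl1def, ← ENNReal.ofReal_mul (by linarith), hl2def,
                      ← ENNReal.ofReal_add (by nlinarith) (by nlinarith)]
                    ring_nf
              -- done
            exact absurd ha₁ (not_lt.mpr this)
      have hcz := cz_weak (Q₀ := Q₀) (f := G Qp) (l := ENNReal.ofReal (Θ * t)) hval'
      have hG3 : (∫⁻ x in Qp.set, ENNReal.ofReal (G Qp x))
          ≤ ENNReal.ofReal ((δ + γ) * t) * volume Qp.set := by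
        rw [← avg_le_iff]
        calc Cube.avg Qp (G Qp)
            ≤ ENNReal.ofReal δ * Cube.avg (Q₀.dyadic k fun i => m i / 2) F
              + ENNReal.ofReal (g Qp) := h3 k m hval'
          _ ≤ ENNReal.ofReal δ * l1 + ENNReal.ofReal (γ * t) :=
              add_le_add (mul_le_mul_right hpar _) (ENNReal.ofReal_le_ofReal hg)
          _ = ENNReal.ofReal ((δ + γ) * t) := by
              rw [hl1def, ← ENNReal.ofReal_mul hδ0,
                ← ENNReal.ofReal_add (by nlinarith) (by nlinarith)]
              ring_nf
      have hΘt : (0:ℝ) < Θ * t := by nlinarith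
      have hvolG : volume (Bad Q₀ (k + 1) m (G Qp) (ENNReal.ofReal (Θ * t)))
          ≤ ENNReal.ofReal ((δ + γ) / Θ) * volume Qp.set := by
        have h5 : ENNReal.ofReal (Θ * t)
            * volume (Bad Q₀ (k + 1) m (G Qp) (ENNReal.ofReal (Θ * t)))
            ≤ ENNReal.ofReal ((δ + γ) * t) * volume Qp.set := le_trans hcz hG3
        have h6 : volume (Bad Q₀ (k + 1) m (G Qp) (ENNReal.ofReal (Θ * t)))
            ≤ ENNReal.ofReal ((δ + γ) * t) * volume Qp.set / ENNReal.ofReal (Θ * t) := by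
          rw [ENNReal.le_div_iff_mul_le (Or.inl (by simp [ENNReal.ofReal_pos, hΘt]))
            (Or.inl ENNReal.ofReal_ne_top)]
          rwa [mul_comm]
        refine le_trans h6 (le_of_eq ?_)
        rw [mul_comm (ENNReal.ofReal ((δ + γ) * t)) (volume Qp.set), mul_div_assoc,
          ← ENNReal.ofReal_div_of_pos hΘt, mul_div_mul_right _ _ (ne_of_gt ht),
          mul_comm]
      calc volume (Bad Q₀ 0 z F l2 ∩ Qp.set)
          ≤ volume (Bad Q₀ (k + 1) m (G Qp) (ENNReal.ofReal (Θ * t))) :=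
            measure_mono hincl
        _ ≤ ENNReal.ofReal ((δ + γ) / Θ) * volume Qp.set := hvolG
        _ ≤ _ := le_self_add
    · -- bad cube: contained in the level set of gstar
      push_neg at hg
      have hsub2 : Qp.set ⊆ Gset := by
        intro x hx
        refine ⟨subset_base Q₀ hval' hx, ?_⟩
        refine lt_of_lt_of_le ?_ (le_gstar Q₀ hval' hx)
        rw [hl3def, ENNReal.ofReal_lt_ofReal_iff_of_nonneg (by positivity)]
        exact hg
      calc volume (Bad Q₀ 0 z F l2 ∩ Qp.set) ≤ volume (Gset ∩ Qp.set) := by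
            apply measure_mono
            rintro x ⟨hx1, hx2⟩
            exact ⟨hsub2 hx2, hx2⟩
        _ ≤ _ := le_add_self
  -- summation over the stopping cubes
  haveI := (Set.to_countable (Stop Q₀ 0 z F l1)).to_subtype
  have hdecomp : Bad Q₀ 0 z F l2
      = ⋃ p ∈ Stop Q₀ 0 z F l1,
          (Bad Q₀ 0 z F l2 ∩ (Q₀.dyadic (0 + p.1) p.2).set) := by
    rw [← Set.inter_iUnion₂, ← bad_eq_biUnion hm₀, Set.inter_eq_left.mpr hAB]
  have hmeasA : MeasurableSet (Bad Q₀ 0 z F l2) := measurableSet_bad hm₀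
  have hvolA : volume (Bad Q₀ 0 z F l2)
      = ∑' p : Stop Q₀ 0 z F l1,
          volume (Bad Q₀ 0 z F l2
            ∩ (Q₀.dyadic (0 + (p : ℕ × (Fin n → ℕ)).1) (p : ℕ × (Fin n → ℕ)).2).set) := by
    conv_lhs => rw [hdecomp]
    exact measure_biUnion (s := Stop Q₀ 0 z F l1) (Set.to_countable _)
      (fun pp hp q hq hne =>
        ((stop_pairwiseDisjoint hp hq hne).mono
          Set.inter_subset_right Set.inter_subset_right))
      (fun pp _ => hmeasA.inter (measurableSet_cube _))
  have hmeasG : MeasurableSet Gset := measurableSet_sep_gstar g l3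
  have hsumG : (∑' p : Stop Q₀ 0 z F l1,
      volume (Gset ∩ (Q₀.dyadic (0 + (p : ℕ × (Fin n → ℕ)).1) (p : ℕ × (Fin n → ℕ)).2).set))
      ≤ volume Gset := by
    have := measure_iUnion (μ := volume)
      (f := fun p : Stop Q₀ 0 z F l1 =>
        Gset ∩ (Q₀.dyadic (0 + (p : ℕ × (Fin n → ℕ)).1) (p : ℕ × (Fin n → ℕ)).2).set)
      (fun pp q hne =>
        ((stop_pairwiseDisjoint pp.2 q.2 (fun (h : (pp : ℕ × (Fin n → ℕ)) = q) => hne (Subtype.ext h))).mono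
          Set.inter_subset_right Set.inter_subset_right))
      (fun pp => hmeasG.inter (measurableSet_cube _))
    rw [← this]
    exact measure_mono (Set.iUnion_subset fun pp => Set.inter_subset_left)
  rw [hBadA, hBadB]
  calc volume (Bad Q₀ 0 z F l2)
      = ∑' p : Stop Q₀ 0 z F l1,
          volume (Bad Q₀ 0 z F l2
            ∩ (Q₀.dyadic (0 + (p : ℕ × (Fin n → ℕ)).1) (p : ℕ × (Fin n → ℕ)).2).set) := hvolA
    _ ≤ ∑' p : Stop Q₀ 0 z F l1,
          (ENNReal.ofReal ((δ + γ) / Θ)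
              * volume (Q₀.dyadic (0 + (p : ℕ × (Fin n → ℕ)).1) (p : ℕ × (Fin n → ℕ)).2).set
            + volume (Gset ∩ (Q₀.dyadic (0 + (p : ℕ × (Fin n → ℕ)).1) (p : ℕ × (Fin n → ℕ)).2).set)) :=
        ENNReal.tsum_le_tsum fun p => key p p.2
    _ = ENNReal.ofReal ((δ + γ) / Θ)
          * (∑' p : Stop Q₀ 0 z F l1,
              volume (Q₀.dyadic (0 + (p : ℕ × (Fin n → ℕ)).1) (p : ℕ × (Fin n → ℕ)).2).set)
        + ∑' p : Stop Q₀ 0 z F l1,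
            volume (Gset ∩ (Q₀.dyadic (0 + (p : ℕ × (Fin n → ℕ)).1) (p : ℕ × (Fin n → ℕ)).2).set) := by
        rw [ENNReal.tsum_add, ENNReal.tsum_mul_left]
    _ ≤ ENNReal.ofReal ((δ + γ) / Θ) * volume (Bad Q₀ 0 z F l1) + volume Gset := by
        rw [← volume_bad_eq hm₀]
        exact add_le_add_right hsumG _

lemma levelset_le_wnorm (f : (Fin n → ℝ) → ℝ≥0∞) (p : ℝ) {t : ℝ} (ht : 0 < t) :
    ENNReal.ofReal t * (volume {x ∈ Q₀.set | ENNReal.ofReal t < f x} / volume Q₀.set)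
        ^ (1 / p) ≤ Q₀.wnorm p f := by
  rw [Cube.wnorm]
  exact le_iSup_of_le t (le_iSup_of_le ht le_rfl)

lemma levelset_vol_le {f : (Fin n → ℝ) → ℝ≥0∞} {p : ℝ} (hp : 0 < p) {t : ℝ} (ht : 0 < t) :
    volume {x ∈ Q₀.set | ENNReal.ofReal t < f x}
      ≤ (Q₀.wnorm p f / ENNReal.ofReal t) ^ p * volume Q₀.set := by
  set X := volume {x ∈ Q₀.set | ENNReal.ofReal t < f x}
  set V := volume Q₀.set
  have h1 : ENNReal.ofReal t * (X / V) ^ (1 / p) ≤ Q₀.wnorm p f :=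
    levelset_le_wnorm (Q₀ := Q₀) f p ht
  have ht0 : ENNReal.ofReal t ≠ 0 := by simp [ENNReal.ofReal_pos, ht, ne_of_gt]
  have h2 : (X / V) ^ (1 / p) ≤ Q₀.wnorm p f / ENNReal.ofReal t := by
    rw [ENNReal.le_div_iff_mul_le (Or.inl ht0) (Or.inl ENNReal.ofReal_ne_top)]
    rwa [mul_comm]
  have h3 : X / V ≤ (Q₀.wnorm p f / ENNReal.ofReal t) ^ p := by
    have := ENNReal.rpow_le_rpow h2 (le_of_lt hp)
    rwa [← ENNReal.rpow_mul, one_div, inv_mul_cancel₀ (ne_of_gt hp),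
      ENNReal.rpow_one] at this
  rw [← ENNReal.div_le_iff_le_mul (Or.inl (volume_cube_pos Q₀).ne')
    (Or.inl (volume_cube_ne_top Q₀))]
  exact h3

lemma wnorm_le_of_bound {f : (Fin n → ℝ) → ℝ≥0∞} {p : ℝ} (hp : 0 < p) {M : ℝ}
    (hb : ∀ t : ℝ, 0 < t →
      ENNReal.ofReal t ^ p * volume {x ∈ Q₀.set | ENNReal.ofReal t < f x}
        ≤ ENNReal.ofReal M) :
    Q₀.wnorm p f ≤ (ENNReal.ofReal M / volume Q₀.set) ^ (1 / p) := by
  rw [Cube.wnorm]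
  refine iSup₂_le fun t ht => ?_
  set X := volume {x ∈ Q₀.set | ENNReal.ofReal t < f x}
  set V := volume Q₀.set
  have h1p : (0:ℝ) ≤ 1 / p := by positivity
  calc ENNReal.ofReal t * (X / V) ^ (1 / p)
      = (ENNReal.ofReal t ^ p) ^ (1 / p) * (X / V) ^ (1 / p) := by
        rw [← ENNReal.rpow_mul, mul_one_div_cancel (ne_of_gt hp), ENNReal.rpow_one]
    _ = (ENNReal.ofReal t ^ p * (X / V)) ^ (1 / p) :=
        (ENNReal.mul_rpow_of_nonneg _ _ h1p).symm
    _ = (ENNReal.ofReal t ^ p * X / V) ^ (1 / p) := by rw [mul_div_assoc]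
    _ ≤ (ENNReal.ofReal M / V) ^ (1 / p) :=
        ENNReal.rpow_le_rpow (ENNReal.div_le_div_right (hb t ht) _) h1p

/-- The iteration of the good-lambda inequality. -/
lemma iteration
    {F : (Fin n → ℝ) → ℝ} {Θ δ γ : ℝ}
    {H G : Cube n → (Fin n → ℝ) → ℝ} {g : Cube n → ℝ}
    (hΘ : 1 ≤ Θ) (hδ0 : 0 ≤ δ) (hγ0 : 0 < γ) (hδγΘ : δ + γ ≤ Θ)
    (hGmeas : ∀ Q, Measurable (G Q))
    (hGnn : ∀ Q x, 0 ≤ G Q x) (hHnn : ∀ Q x, 0 ≤ H Q x)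
    (h1 : ∀ (k : ℕ) (m : Fin n → ℕ), (∀ i, m i < 2 ^ (k + 1)) →
      ∀ᵐ x ∂(volume.restrict (Q₀.dyadic (k + 1) m).set),
        F x ≤ G (Q₀.dyadic (k + 1) m) x + H (Q₀.dyadic (k + 1) m) x)
    (h2 : ∀ (k : ℕ) (m : Fin n → ℕ), (∀ i, m i < 2 ^ (k + 1)) →
      eLpNorm (H (Q₀.dyadic (k + 1) m)) ⊤ (volume.restrict (Q₀.dyadic (k + 1) m).set)
        ≤ ENNReal.ofReal Θ * Cube.avg (Q₀.dyadic k (fun i => m i / 2)) F)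
    (h3 : ∀ (k : ℕ) (m : Fin n → ℕ), (∀ i, m i < 2 ^ (k + 1)) →
      Cube.avg (Q₀.dyadic (k + 1) m) (G (Q₀.dyadic (k + 1) m))
        ≤ ENNReal.ofReal δ * Cube.avg (Q₀.dyadic k (fun i => m i / 2)) F
          + ENNReal.ofReal (g (Q₀.dyadic (k + 1) m)))
    {p : ℝ} (hp : 0 < p)
    (hε : (2 * Θ) ^ p * ((δ + γ) / Θ) < 1)
    (hW : Q₀.wnorm p (Q₀.gstar g) ≠ ⊤)
    (hafin : Cube.avg Q₀ F ≠ ⊤) :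
    ∃ M : ℝ, 0 ≤ M ∧ ∀ t : ℝ, 0 < t →
      ENNReal.ofReal t ^ p * volume {x ∈ Q₀.set | ENNReal.ofReal t < Q₀.maximal F x}
        ≤ ENNReal.ofReal M := by
  classical
  set V := volume Q₀.set with hVdef
  set Vr := V.toReal with hVrdef
  have hVne : V ≠ ⊤ := volume_cube_ne_top Q₀
  have hVeq : V = ENNReal.ofReal Vr := (ENNReal.ofReal_toReal hVne).symm
  have hVr0 : 0 ≤ Vr := ENNReal.toReal_nonneg
  set w := (Q₀.wnorm p (Q₀.gstar g)).toReal with hwdef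
  have hWeq : Q₀.wnorm p (Q₀.gstar g) = ENNReal.ofReal w := (ENNReal.ofReal_toReal hW).symm
  have hw0 : 0 ≤ w := ENNReal.toReal_nonneg
  set t₀ := (Cube.avg Q₀ F).toReal + 1 with ht₀def
  have ht₀pos : 0 < t₀ := by positivity
  have hat₀ : Cube.avg Q₀ F ≤ ENNReal.ofReal t₀ := by
    rw [ht₀def]
    calc Cube.avg Q₀ F = ENNReal.ofReal ((Cube.avg Q₀ F).toReal) :=
          (ENNReal.ofReal_toReal hafin).symm
      _ ≤ _ := ENNReal.ofReal_le_ofReal (by linarith)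
  have hΘ0 : (0:ℝ) < Θ := by linarith
  set e := (2 * Θ) ^ p * ((δ + γ) / Θ) with hedef
  have he0 : 0 ≤ e := by positivity
  set K := ((2 * Θ * w) / γ) ^ p * Vr with hKdef
  have hK0 : 0 ≤ K := by positivity
  set B₀ := (2 * Θ * t₀) ^ p * Vr with hB₀def
  have hB₀0 : 0 ≤ B₀ := by positivity
  set M := (B₀ + K) / (1 - e) with hMdef
  have h1e : 0 < 1 - e := by linarith
  have hM0 : 0 ≤ M := by positivity
  have hMbig : B₀ + K ≤ M := by
    rw [hMdef, le_div_iff₀ h1e]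
    nlinarith
  have hMfix : e * M + K ≤ M := by
    have : (1 - e) * M = B₀ + K := by
      rw [hMdef]; field_simp
    nlinarith
  refine ⟨M, hM0, ?_⟩
  -- Φ is the distribution function of the maximal operator
  set Φ : ℝ → ℝ≥0∞ := fun t => volume {x ∈ Q₀.set | ENNReal.ofReal t < Q₀.maximal F x}
    with hΦdef
  have hΦle : ∀ t, Φ t ≤ V := fun t => measure_mono fun x hx => hx.1
  -- base estimate
  have base : ∀ t : ℝ, 0 < t → t ≤ 2 * Θ * t₀ → ENNReal.ofReal t ^ p * Φ t
      ≤ ENNReal.ofReal M := by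
    intro t ht hle
    calc ENNReal.ofReal t ^ p * Φ t ≤ ENNReal.ofReal (2 * Θ * t₀) ^ p * V :=
          mul_le_mul' (ENNReal.rpow_le_rpow (ENNReal.ofReal_le_ofReal hle) hp.le) (hΦle t)
      _ = ENNReal.ofReal B₀ := by
          rw [ENNReal.ofReal_rpow_of_pos (by positivity), hVeq,
            ← ENNReal.ofReal_mul (by positivity), hB₀def]
      _ ≤ ENNReal.ofReal M := ENNReal.ofReal_le_ofReal (by linarith)
  -- inductive step over dyadic ranges
  have main : ∀ N : ℕ, ∀ t : ℝ, 0 < t → t ≤ (2 * Θ) ^ N * (2 * Θ * t₀) →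
      ENNReal.ofReal t ^ p * Φ t ≤ ENNReal.ofReal M := by
    intro N
    induction N with
    | zero => intro t ht hle; exact base t ht (by rw [pow_zero, one_mul] at hle; exact hle)
    | succ N ih =>
      intro t ht hle
      by_cases hsmall : t ≤ 2 * Θ * t₀
      · exact base t ht hsmall
      · push_neg at hsmall
        set u := t / (2 * Θ) with hudef
        have h2Θ : (0:ℝ) < 2 * Θ := by linarith
        have hu0 : 0 < u := div_pos ht h2Θ
        have hut : 2 * Θ * u = t := by rw [hudef]; field_simp
        have hut₀ : t₀ < u := by
          rw [hudef, lt_div_iff₀ h2Θ]; nlinarith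
        have huN : u ≤ (2 * Θ) ^ N * (2 * Θ * t₀) := by
          rw [hudef, div_le_iff₀ h2Θ]
          calc t ≤ (2 * Θ) ^ (N + 1) * (2 * Θ * t₀) := hle
            _ = (2 * Θ) ^ N * (2 * Θ * t₀) * (2 * Θ) := by ring
        have hau : Cube.avg Q₀ F ≤ ENNReal.ofReal u :=
          le_trans hat₀ (ENNReal.ofReal_le_ofReal hut₀.le)
        have hgl := good_lambda_step (Q₀ := Q₀) hΘ hδ0 hγ0 hδγΘ hGmeas hGnn hHnn h1 h2 h3 hu0 hau
        -- identify Φ t with the left side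
        rw [hut] at hgl
        have hglΦ : Φ t ≤ ENNReal.ofReal ((δ + γ) / Θ) * Φ u
            + volume {x ∈ Q₀.set | ENNReal.ofReal (γ * u) < Q₀.gstar g x} := hgl
        have hvolG : volume {x ∈ Q₀.set | ENNReal.ofReal (γ * u) < Q₀.gstar g x}
            ≤ (ENNReal.ofReal w / ENNReal.ofReal (γ * u)) ^ p * V := by
          have := levelset_vol_le (Q₀ := Q₀) (f := Q₀.gstar g) hp (t := γ * u) (by positivity)
          rwa [hWeq] at this
        have htsplit : ENNReal.ofReal t ^ p
            = ENNReal.ofReal ((2 * Θ) ^ p) * ENNReal.ofReal u ^ p := by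
          rw [← hut, ENNReal.ofReal_mul (by positivity),
            ENNReal.mul_rpow_of_nonneg _ _ hp.le, ENNReal.ofReal_rpow_of_pos h2Θ]
        calc ENNReal.ofReal t ^ p * Φ t
            ≤ ENNReal.ofReal t ^ p * (ENNReal.ofReal ((δ + γ) / Θ) * Φ u
              + volume {x ∈ Q₀.set | ENNReal.ofReal (γ * u) < Q₀.gstar g x}) :=
              mul_le_mul_right hglΦ _
          _ = ENNReal.ofReal t ^ p * (ENNReal.ofReal ((δ + γ) / Θ) * Φ u)
              + ENNReal.ofReal t ^ p
                * volume {x ∈ Q₀.set | ENNReal.ofReal (γ * u) < Q₀.gstar g x} := by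
              rw [mul_add]
          _ ≤ ENNReal.ofReal e * (ENNReal.ofReal u ^ p * Φ u) + ENNReal.ofReal K := by
              refine add_le_add (le_of_eq ?_) ?_
              · rw [htsplit, hedef, ENNReal.ofReal_mul (by positivity)]
                ring
              · calc ENNReal.ofReal t ^ p
                    * volume {x ∈ Q₀.set | ENNReal.ofReal (γ * u) < Q₀.gstar g x}
                    ≤ ENNReal.ofReal t ^ p
                      * ((ENNReal.ofReal w / ENNReal.ofReal (γ * u)) ^ p * V) :=
                      mul_le_mul_right hvolG _
                  _ = (ENNReal.ofReal t * (ENNReal.ofReal w / ENNReal.ofReal (γ * u))) ^ p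
                        * V := by
                      rw [ENNReal.mul_rpow_of_nonneg _ _ hp.le, mul_assoc]
                  _ = ENNReal.ofReal ((2 * Θ * w) / γ) ^ p * V := by
                      congr 2
                      rw [← ENNReal.ofReal_div_of_pos (by positivity),
                        ← ENNReal.ofReal_mul ht.le]
                      congr 1
                      rw [← hut]
                      field_simp
                  _ = ENNReal.ofReal K := by
                      rw [ENNReal.ofReal_rpow_of_nonneg (by positivity) hp.le, hVeq,
                        ← ENNReal.ofReal_mul (by positivity), hKdef]
          _ ≤ ENNReal.ofReal e * ENNReal.ofReal M + ENNReal.ofReal K := by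
              gcongr
              exact ih u hu0 huN
          _ = ENNReal.ofReal (e * M + K) := by
              rw [← ENNReal.ofReal_mul he0, ← ENNReal.ofReal_add (by positivity) hK0]
          _ ≤ ENNReal.ofReal M := ENNReal.ofReal_le_ofReal hMfix
  -- every positive t lies in some dyadic range
  intro t ht
  have h2Θ1 : (1:ℝ) < 2 * Θ := by linarith
  obtain ⟨N, hN⟩ := pow_unbounded_of_one_lt (t / (2 * Θ * t₀)) h2Θ1
  refine main N t ht ?_
  have : t / (2 * Θ * t₀) ≤ (2 * Θ) ^ N := le_of_lt hN
  rw [div_le_iff₀ (by positivity)] at this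
  linarith [this]

/-- closed version of a cube. -/
def clset (Q : Cube n) : Set (Fin n → ℝ) :=
  Set.univ.pi fun i => Set.Icc (Q.corner i) (Q.corner i + Q.side)

lemma subset_clset (Q : Cube n) : Q.set ⊆ clset Q := by
  intro x hx
  rw [clset, Set.mem_univ_pi]
  exact fun i => ⟨(hx i).1, le_of_lt (hx i).2⟩

lemma volume_clset (Q : Cube n) : volume (clset Q) = ENNReal.ofReal Q.side ^ n := by
  rw [clset, volume_pi_pi]
  simp [Real.volume_Icc]

lemma measurableSet_clset (Q : Cube n) : MeasurableSet (clset Q) :=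
  MeasurableSet.univ_pi fun i => measurableSet_Icc

lemma clset_ae_eq (Q : Cube n) : clset Q =ᵐ[volume] Q.set := by
  rw [MeasureTheory.ae_eq_set]
  constructor
  · have hd : volume (clset Q \ Q.set) = volume (clset Q) - volume Q.set :=
      measure_diff (subset_clset Q) (measurableSet_cube Q).nullMeasurableSet
        (volume_cube_ne_top Q)
    rw [hd, volume_clset, volume_cube, tsub_self]
  · rw [Set.diff_eq_empty.mpr (subset_clset Q)]
    simp

lemma volume_closedBall_pi (x : Fin n → ℝ) {r : ℝ} (hr : 0 ≤ r) :
    volume (Metric.closedBall x r) = ENNReal.ofReal (2 * r) ^ n := by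
  rw [closedBall_pi _ hr, volume_pi_pi]
  simp only [Real.closedBall_eq_Icc, Real.volume_Icc]
  have : ∀ i : Fin n, x i + r - (x i - r) = 2 * r := fun i => by ring
  simp [this]

/-- The Vitali family adapted to cubes. -/
noncomputable def vFamily (n : ℕ) : VitaliFamily (volume : Measure (Fin n → ℝ)) :=
  Vitali.vitaliFamily volume ((6 : ℝ≥0) ^ n) (by
    intro x
    apply Filter.Eventually.frequently
    filter_upwards [self_mem_nhdsWithin] with r (hr : 0 < r)
    rw [volume_closedBall_pi x (by linarith : (0:ℝ) ≤ 3 * r),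
      volume_closedBall_pi x hr.le]
    rw [show (2 : ℝ) * (3 * r) = 3 * (2 * r) by ring, ENNReal.ofReal_mul (by norm_num),
      mul_pow, ENNReal.coe_pow]
    gcongr
    · rw [show ((6:ℝ≥0):ℝ≥0∞) = ENNReal.ofReal 6 by simp]
      exact ENNReal.ofReal_le_ofReal (by norm_num)
    )

lemma clset_mem_setsAt {Q : Cube n} {x : Fin n → ℝ} (hx : x ∈ Q.set) :
    clset Q ∈ (vFamily n).setsAt x := by
  have hside := Q.side_pos
  refine ⟨isClosed_set_pi fun i _ => isClosed_Icc, ?_, Q.side, ?_, ?_⟩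
  · have hsub : (Set.univ.pi fun i => Set.Ioo (Q.corner i) (Q.corner i + Q.side))
        ⊆ interior (clset Q) := by
      refine interior_maximal ?_ (isOpen_set_pi Set.finite_univ fun i _ => isOpen_Ioo)
      intro y hy
      rw [clset, Set.mem_univ_pi]
      intro i
      have := hy i (Set.mem_univ i)
      exact ⟨le_of_lt this.1, le_of_lt this.2⟩
    refine ⟨fun i => Q.corner i + Q.side / 2, hsub ?_⟩
    rw [Set.mem_univ_pi]
    intro i
    simp only [Set.mem_Ioo]
    constructor <;> linarith
  · intro y hy
    rw [clset, Set.mem_univ_pi] at hy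
    rw [Metric.mem_closedBall, dist_pi_le_iff hside.le]
    intro i
    rw [Real.dist_eq, abs_le]
    have h1 := (hy i).1
    have h2 := (hy i).2
    have h3 := (hx i).1
    have h4 := (hx i).2
    constructor <;> linarith
  · rw [volume_closedBall_pi x (by linarith : (0:ℝ) ≤ 3 * Q.side), volume_clset]
    rw [show (2 : ℝ) * (3 * Q.side) = 6 * Q.side by ring, ENNReal.ofReal_mul (by norm_num),
      mul_pow, ENNReal.coe_pow]
    refine mul_le_mul_left (pow_le_pow_left₀ zero_le (by simp) n) _

lemma dyadic_side (k : ℕ) (m : Fin n → ℕ) : (Q₀.dyadic k m).side = Q₀.side / 2 ^ k := rfl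

/-- For a.e. `x ∈ Q₀` with `F x > t` we have `M_{Q₀}F x > t`. -/
lemma ae_lt_maximal {F : (Fin n → ℝ) → ℝ}
    (hFmeas : Measurable F) (hFnn : ∀ x, 0 ≤ F x) (hFint : IntegrableOn F Q₀.set) :
    ∀ t : ℝ, 0 < t →
      volume {x ∈ Q₀.set | ENNReal.ofReal t < ENNReal.ofReal (F x)}
        ≤ volume {x ∈ Q₀.set | ENNReal.ofReal t < Q₀.maximal F x} := by
  intro t ht
  set f := Q₀.set.indicator F with hfdef
  have hfint : Integrable f := by
    rw [hfdef, ← integrableOn_univ]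
    exact (hFint.integrable_indicator (measurableSet_cube Q₀)).integrableOn
  have hLfin : (∫⁻ y in Q₀.set, ENNReal.ofReal (F y)) ≠ ⊤ := by
    refine ne_of_lt (lt_of_le_of_lt ?_ hFint.2)
    exact lintegral_mono fun y => Real.ofReal_le_enorm (F y)
  have hdiff := (vFamily n).ae_tendsto_average (hfint.locallyIntegrable)
  apply measure_mono_ae
  filter_upwards [hdiff] with x hx
  rintro ⟨hxQ, hFx'⟩
  have hFxpos : 0 < F x := by
    by_contra hcon
    push_neg at hcon
    rw [ENNReal.ofReal_eq_zero.mpr hcon] at hFx'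
    exact absurd hFx' (by simp)
  have hFx : t < F x := (ENNReal.ofReal_lt_ofReal_iff hFxpos).mp hFx'
  refine ⟨hxQ, ?_⟩
  -- the sequence of closed dyadic cubes containing x
  set a : ℕ → Set (Fin n → ℝ) := fun k => clset (Q₀.dyadic k (idx Q₀ k x)) with hadef
  have hmem : ∀ k, x ∈ (Q₀.dyadic k (idx Q₀ k x)).set := fun k => mem_idx Q₀ hxQ
  have htendsto : Tendsto a atTop ((vFamily n).filterAt x) := by
    rw [VitaliFamily.tendsto_filterAt_iff]
    constructor
    · exact Filter.Eventually.of_forall fun k => clset_mem_setsAt (hmem k)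
    · intro ε hε
      obtain ⟨K, hK⟩ := pow_unbounded_of_one_lt (Q₀.side / ε) (by norm_num : (1:ℝ) < 2)
      rw [Filter.eventually_atTop]
      refine ⟨K, fun k hk => ?_⟩
      have hsk : Q₀.side / 2 ^ k ≤ ε := by
        rw [div_le_iff₀ (by positivity)]
        have h2 : (2:ℝ) ^ K ≤ 2 ^ k := pow_le_pow_right₀ (by norm_num) hk
        have := Q₀.side_pos
        rw [div_lt_iff₀ hε] at hK
        nlinarith
      intro y hy
      have hsub : a k ⊆ Metric.closedBall x (Q₀.side / 2 ^ k) := by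
        intro z hz
        simp only [hadef, clset, Set.mem_univ_pi] at hz
        rw [Metric.mem_closedBall, dist_pi_le_iff (div_nonneg Q₀.side_pos.le (by positivity))]
        intro i
        have h1 := (hz i).1
        have h2 := (hz i).2
        have h3 := (hmem k i).1
        have h4 := (hmem k i).2
        rw [dyadic_side] at h2 h4
        rw [Real.dist_eq, abs_le]
        constructor <;> linarith
      exact Metric.closedBall_subset_closedBall hsk (hsub hy)
  have htend2 : Tendsto (fun k => ⨍ y in a k, f y) atTop (𝓝 (F x)) := by
    have : f x = F x := Set.indicator_of_mem hxQ F
    rw [← this]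
    exact hx.comp htendsto
  have hev : ∀ᶠ k in atTop, t < ⨍ y in a k, f y :=
    htend2.eventually (eventually_gt_nhds hFx)
  obtain ⟨k, hk⟩ := hev.exists
  -- identify the average with the ENNReal-valued average of `F` on the dyadic cube
  set D := Q₀.dyadic k (idx Q₀ k x) with hDdef
  have hDsub : D.set ⊆ Q₀.set := subset_base Q₀ fun i => idx_valid Q₀ hxQ i
  have havg1 : (⨍ y in a k, f y) = ⨍ y in D.set, f y := by
    rw [hadef]
    congr 1
    exact Measure.restrict_congr_set (clset_ae_eq D)
  have havg2 : (⨍ y in D.set, f y) = ⨍ y in D.set, F y := by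
    apply setAverage_congr_fun (measurableSet_cube D)
    exact Filter.Eventually.of_forall fun y hy => Set.indicator_of_mem (hDsub hy) F
  have hlint : (∫ y in D.set, F y)
      = (∫⁻ y in D.set, ENNReal.ofReal (F y)).toReal := by
    rw [MeasureTheory.integral_eq_lintegral_of_nonneg_ae
      (Filter.Eventually.of_forall fun y => hFnn y)
      hFmeas.aestronglyMeasurable]
  have hLD : (∫⁻ y in D.set, ENNReal.ofReal (F y)) ≠ ⊤ :=
    ne_of_lt (lt_of_le_of_lt (lintegral_mono_set hDsub) (lt_of_le_of_ne le_top hLfin))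
  have havg3 : ENNReal.ofReal t < Cube.avg D F := by
    have hfin : Cube.avg D F ≠ ⊤ := by
      rw [Cube.avg]
      exact ne_of_lt (ENNReal.div_lt_top hLD (volume_cube_pos D).ne')
    rw [ENNReal.ofReal_lt_iff_lt_toReal ht.le hfin, Cube.avg, ENNReal.toReal_div]
    have := hk
    rw [havg1, havg2, setAverage_eq, hlint] at this
    rw [div_eq_inv_mul]
    simpa [Measure.real] using this
  exact lt_of_lt_of_le havg3 (le_maximal Q₀ (fun i => idx_valid Q₀ hxQ i) (hmem k))

lemma wnorm_ofReal_le_wnorm_maximal {F : (Fin n → ℝ) → ℝ} {p : ℝ} (hp : 0 < p)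
    (hFmeas : Measurable F) (hFnn : ∀ x, 0 ≤ F x) (hFint : IntegrableOn F Q₀.set) :
    Q₀.wnorm p (fun x => ENNReal.ofReal (F x)) ≤ Q₀.wnorm p (Q₀.maximal F) := by
  rw [Cube.wnorm, Cube.wnorm]
  refine iSup_mono fun t => iSup_mono' fun ht => ⟨ht, ?_⟩
  refine mul_le_mul_right (ENNReal.rpow_le_rpow ?_ (by positivity)) _
  exact ENNReal.div_le_div_right (ae_lt_maximal (Q₀ := Q₀) hFmeas hFnn hFint t ht) _

lemma exists_gamma {Θ δ p : ℝ} (hΘ : 1 ≤ Θ) (hδ0 : 0 ≤ δ) (hδ1 : δ < 1 / 2)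
    (hp : 1 < p)
    (hp' : δ = 0 ∨ p < 1 + Real.log (1 / (2 * δ)) / Real.log (2 * Θ)) :
    ∃ γ : ℝ, 0 < γ ∧ δ + γ ≤ Θ ∧ (2 * Θ) ^ p * ((δ + γ) / Θ) < 1 := by
  have hΘ0 : (0:ℝ) < Θ := by linarith
  have h2Θ : (0:ℝ) < 2 * Θ := by linarith
  set A := (2 * Θ) ^ p / Θ with hAdef
  have hA0 : 0 < A := by positivity
  have hδA : δ * A < 1 := by
    rcases eq_or_lt_of_le hδ0 with h0 | hδpos
    · rw [← h0]; norm_num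
    · rcases hp' with h0 | hplt
      · exact absurd h0 (ne_of_gt hδpos)
      · have hL : 0 < Real.log (2 * Θ) := Real.log_pos (by linarith)
        have h5 : (p - 1) * Real.log (2 * Θ) < Real.log (1 / (2 * δ)) := by
          rw [← lt_div_iff₀ hL]; linarith
        have h6 : (2 * Θ) ^ (p - 1) < 1 / (2 * δ) := by
          rw [← Real.exp_log (by positivity : (0:ℝ) < 1 / (2 * δ)),
            Real.rpow_def_of_pos h2Θ]
          exact Real.exp_lt_exp.mpr (by linarith [h5])
        have hA : A = 2 * (2 * Θ) ^ (p - 1) := by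
          rw [hAdef, show p = (p - 1) + 1 by ring, Real.rpow_add h2Θ, Real.rpow_one]
          field_simp
          ring
        rw [hA]
        calc δ * (2 * (2 * Θ) ^ (p - 1)) = (2 * δ) * (2 * Θ) ^ (p - 1) := by ring
          _ < (2 * δ) * (1 / (2 * δ)) := by
              apply mul_lt_mul_of_pos_left h6 (by linarith)
          _ = 1 := by field_simp
  refine ⟨min (1/4) ((1 - δ * A) / (2 * A)), ?_, ?_, ?_⟩
  · apply lt_min (by norm_num)
    apply div_pos (by linarith) (by linarith)
  · have : min (1/4) ((1 - δ * A) / (2 * A)) ≤ 1/4 := min_le_left _ _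
    linarith
  · have hXA : (2 * Θ) ^ p * ((δ + min (1/4) ((1 - δ * A) / (2 * A))) / Θ)
        = (δ + min (1/4) ((1 - δ * A) / (2 * A))) * A := by
      rw [hAdef]; field_simp
    rw [hXA]
    have hmin : min (1/4) ((1 - δ * A) / (2 * A)) ≤ (1 - δ * A) / (2 * A) := min_le_right _ _
    have h8 : min (1/4) ((1 - δ * A) / (2 * A)) * A ≤ (1 - δ * A) / 2 := by
      calc min (1/4) ((1 - δ * A) / (2 * A)) * A ≤ ((1 - δ * A) / (2 * A)) * A :=
            mul_le_mul_of_nonneg_right hmin hA0.le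
        _ = (1 - δ * A) / 2 := by field_simp
    nlinarith

lemma avg_ne_top {F : (Fin n → ℝ) → ℝ} (hFint : IntegrableOn F Q₀.set) :
    Cube.avg Q₀ F ≠ ⊤ := by
  have hL : (∫⁻ y in Q₀.set, ENNReal.ofReal (F y)) ≠ ⊤ := by
    refine ne_of_lt (lt_of_le_of_lt ?_ hFint.2)
    exact lintegral_mono fun y => Real.ofReal_le_enorm (F y)
  rw [Cube.avg]
  exact ne_of_lt (ENNReal.div_lt_top hL (volume_cube_pos Q₀).ne')

end GLaux

/-- **Good-λ inequality: weak `L^p` estimate (dyadic case).** -/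
theorem good_lambda_dyadic_weak_Lp (n : ℕ) (Q₀ : Cube n) (F : (Fin n → ℝ) → ℝ)
    (hFmeas : Measurable F) (hFnonneg : ∀ x, 0 ≤ F x)
    (hFint : IntegrableOn F Q₀.set)
    (Θ δ : ℝ) (hΘ : 1 ≤ Θ) (hδ0 : 0 ≤ δ) (hδ1 : δ < 1 / 2)
    (H G : Cube n → (Fin n → ℝ) → ℝ) (g : Cube n → ℝ)
    (hHmeas : ∀ Q, Measurable (H Q)) (hGmeas : ∀ Q, Measurable (G Q))
    (hHnn : ∀ Q x, 0 ≤ H Q x) (hGnn : ∀ Q x, 0 ≤ G Q x) (hgnn : ∀ Q, 0 ≤ g Q)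
    (h1 : ∀ (k : ℕ) (m : Fin n → ℕ), (∀ i, m i < 2 ^ (k + 1)) →
      ∀ᵐ x ∂(volume.restrict (Q₀.dyadic (k + 1) m).set),
        F x ≤ G (Q₀.dyadic (k + 1) m) x + H (Q₀.dyadic (k + 1) m) x)
    (h2 : ∀ (k : ℕ) (m : Fin n → ℕ), (∀ i, m i < 2 ^ (k + 1)) →
      eLpNorm (H (Q₀.dyadic (k + 1) m)) ⊤ (volume.restrict (Q₀.dyadic (k + 1) m).set)
        ≤ ENNReal.ofReal Θ * Cube.avg (Q₀.dyadic k (fun i => m i / 2)) F)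
    (h3 : ∀ (k : ℕ) (m : Fin n → ℕ), (∀ i, m i < 2 ^ (k + 1)) →
      Cube.avg (Q₀.dyadic (k + 1) m) (G (Q₀.dyadic (k + 1) m))
        ≤ ENNReal.ofReal δ * Cube.avg (Q₀.dyadic k (fun i => m i / 2)) F
          + ENNReal.ofReal (g (Q₀.dyadic (k + 1) m)))
    (p : ℝ) (hp : 1 < p)
    (hp' : δ = 0 ∨ p < 1 + Real.log (1 / (2 * δ)) / Real.log (2 * Θ)) :
    ∃ C : ℝ, 0 < C ∧
      Cube.wnorm Q₀ p (fun x => ENNReal.ofReal (F x))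
        ≤ Cube.wnorm Q₀ p (Cube.maximal Q₀ F) ∧
      Cube.wnorm Q₀ p (Cube.maximal Q₀ F)
        ≤ ENNReal.ofReal C * Cube.wnorm Q₀ p (Cube.gstar Q₀ g)
          + ENNReal.ofReal C * Cube.avg Q₀ F := by
  classical
  have hp0 : (0:ℝ) < p := by linarith
  obtain ⟨γ, hγ0, hδγΘ, hε⟩ := GLaux.exists_gamma hΘ hδ0 hδ1 hp hp'
  have part1 : Cube.wnorm Q₀ p (fun x => ENNReal.ofReal (F x))
      ≤ Cube.wnorm Q₀ p (Cube.maximal Q₀ F) :=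
    GLaux.wnorm_ofReal_le_wnorm_maximal (Q₀ := Q₀) hp0 hFmeas hFnonneg hFint
  by_cases hW : Cube.wnorm Q₀ p (Cube.gstar Q₀ g) = ⊤
  · refine ⟨1, one_pos, part1, ?_⟩
    rw [hW, ENNReal.mul_top (by simp), top_add]
    exact le_top
  by_cases ha0 : (∫⁻ x in Q₀.set, ENNReal.ofReal (F x)) = 0
  · -- the maximal function vanishes identically
    have hzero : ∀ x, Cube.maximal Q₀ F x = 0 := by
      intro x
      rw [Cube.maximal]
      refine le_antisymm ?_ zero_le
      refine iSup_le fun k => iSup_le fun m => iSup_le fun hkm => ?_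
      rw [Cube.avg]
      have hzz : (∫⁻ y in (Q₀.dyadic k m).set, ENNReal.ofReal (F y)) = 0 :=
        le_antisymm (le_trans (lintegral_mono_set (GLaux.subset_base Q₀ hkm.1))
          (le_of_eq ha0)) zero_le
      rw [hzz, ENNReal.zero_div]
    have hM0 : Cube.wnorm Q₀ p (Cube.maximal Q₀ F) = 0 := by
      rw [Cube.wnorm]
      refine le_antisymm (iSup_le fun t => iSup_le fun ht => ?_) zero_le
      have hempty : {x ∈ Q₀.set | ENNReal.ofReal t < Cube.maximal Q₀ F x} = ∅ := by
        ext x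
        simp only [Set.mem_setOf_eq, hzero, Set.mem_empty_iff_false, iff_false, not_and]
        intro _
        simp
      rw [hempty, measure_empty, ENNReal.zero_div,
        ENNReal.zero_rpow_of_pos (by positivity : (0:ℝ) < 1 / p), mul_zero]
    refine ⟨1, one_pos, part1, ?_⟩
    rw [hM0]
    exact zero_le
  · -- the main case
    have hafin : Cube.avg Q₀ F ≠ ⊤ := GLaux.avg_ne_top (Q₀ := Q₀) hFint
    have hane : Cube.avg Q₀ F ≠ 0 := by
      rw [Cube.avg, Ne, ENNReal.div_eq_zero_iff]
      push_neg
      exact ⟨ha0, GLaux.volume_cube_ne_top Q₀⟩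
    obtain ⟨M, hM0, hMb⟩ := GLaux.iteration (Q₀ := Q₀) hΘ hδ0 hγ0 hδγΘ hGmeas hGnn hHnn
      h1 h2 h3 hp0 hε hW hafin
    have hwn := GLaux.wnorm_le_of_bound (Q₀ := Q₀) hp0 hMb
    set T := (ENNReal.ofReal M / volume Q₀.set) ^ (1 / p) with hTdef
    have hTne : T ≠ ⊤ := by
      rw [hTdef]
      refine ENNReal.rpow_ne_top_of_nonneg (by positivity) ?_
      exact ne_of_lt (ENNReal.div_lt_top ENNReal.ofReal_ne_top
        (GLaux.volume_cube_pos Q₀).ne')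
    have hTa : T / Cube.avg Q₀ F ≠ ⊤ :=
      ne_of_lt (ENNReal.div_lt_top hTne hane)
    set C := (T / Cube.avg Q₀ F).toReal + 1 with hCdef
    have hC0 : 0 < C := by positivity
    refine ⟨C, hC0, part1, ?_⟩
    have h7 : Cube.wnorm Q₀ p (Cube.maximal Q₀ F) ≤ ENNReal.ofReal C * Cube.avg Q₀ F := by
      calc Cube.wnorm Q₀ p (Cube.maximal Q₀ F) ≤ T := hwn
        _ = (T / Cube.avg Q₀ F) * Cube.avg Q₀ F :=
            (ENNReal.div_mul_cancel hane hafin).symm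
        _ ≤ ENNReal.ofReal C * Cube.avg Q₀ F := by
            refine mul_le_mul_left ?_ _
            rw [hCdef]
            calc T / Cube.avg Q₀ F
                = ENNReal.ofReal ((T / Cube.avg Q₀ F).toReal) :=
                  (ENNReal.ofReal_toReal hTa).symm
              _ ≤ _ := ENNReal.ofReal_le_ofReal (by linarith)
    exact le_trans h7 le_add_self
end

section
/- Let 1 < p < ∞. For every cube Q_0 ⊂ ℝ^n and every f ∈ L^1(Q_0) with ‖f‖_{JN_p^{dyadic},Q_0} < ∞, one has ‖M^#_{Q_0}f‖_{L^{p,∞},Q_0} ≤ ‖f‖_{JN_p^{dyadic},Q_0}, where M^#_{Q_0} is the local dyadic sharp maximal function. -/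
open MeasureTheory Filter
open scoped ENNReal NNReal Topology

namespace CubeAux
open Cube
variable {n : ℕ}

lemma mem_dyadic_iff {Q₀ : Cube n} {k : ℕ} {m : Fin n → ℕ} {x : Fin n → ℝ} :
    x ∈ (Q₀.dyadic k m).set ↔ ∀ i,
      (m i : ℝ) * (Q₀.side / 2 ^ k) ≤ x i - Q₀.corner i ∧
      x i - Q₀.corner i < ((m i : ℝ) + 1) * (Q₀.side / 2 ^ k) := by
  simp only [Cube.set, Cube.dyadic, Set.mem_setOf_eq]
  refine forall_congr' fun i => ?_
  constructor <;> rintro ⟨h1, h2⟩ <;> constructor <;> nlinarith [h1, h2]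

lemma eq_of_mem_same {Q₀ : Cube n} {k : ℕ} {m m' : Fin n → ℕ} {x : Fin n → ℝ}
    (h : x ∈ (Q₀.dyadic k m).set) (h' : x ∈ (Q₀.dyadic k m').set) : m = m' := by
  rw [mem_dyadic_iff] at h h'
  funext i
  have d0 : (0:ℝ) < Q₀.side / 2 ^ k := div_pos Q₀.side_pos (by positivity)
  rcases Nat.lt_trichotomy (m i) (m' i) with hlt | heq | hlt
  · have hc : ((m i : ℝ) + 1) ≤ (m' i : ℝ) := by exact_mod_cast hlt
    nlinarith [(h i).2, (h' i).1]
  · exact heq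
  · have hc : ((m' i : ℝ) + 1) ≤ (m i : ℝ) := by exact_mod_cast hlt
    nlinarith [(h' i).2, (h i).1]

lemma subset_ancestor {Q₀ : Cube n} {j k : ℕ} (hjk : j ≤ k) (m : Fin n → ℕ) :
    (Q₀.dyadic k m).set ⊆ (Q₀.dyadic j (fun i => m i / 2 ^ (k - j))).set := by
  intro x hx
  rw [mem_dyadic_iff] at hx ⊢
  intro i
  obtain ⟨h1, h2⟩ := hx i
  have hd : (0:ℝ) < Q₀.side / 2 ^ k := div_pos Q₀.side_pos (by positivity)
  have hpow : Q₀.side / 2 ^ j = 2 ^ (k - j) * (Q₀.side / 2 ^ k) := by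
    have h2k : (2:ℝ) ^ k = 2 ^ (k - j) * 2 ^ j := by
      rw [← pow_add]; congr 1; omega
    rw [h2k]
    field_simp
  have hle : (m i / 2 ^ (k - j)) * 2 ^ (k - j) ≤ m i := Nat.div_mul_le_self _ _
  have hlt : m i < (m i / 2 ^ (k - j) + 1) * 2 ^ (k - j) := by
    have hp2 : 0 < 2 ^ (k - j) := Nat.pow_pos (by norm_num)
    have := Nat.div_add_mod (m i) (2 ^ (k - j))
    have := Nat.mod_lt (m i) hp2
    nlinarith [Nat.div_mul_le_self (m i) (2 ^ (k - j))]
  have hleR : ((m i / 2 ^ (k - j) : ℕ) : ℝ) * 2 ^ (k - j) ≤ (m i : ℝ) := by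
    exact_mod_cast hle
  have hltR : (m i : ℝ) + 1 ≤ (((m i / 2 ^ (k - j) : ℕ) : ℝ) + 1) * 2 ^ (k - j) := by
    exact_mod_cast hlt
  rw [hpow]
  constructor
  · nlinarith
  · nlinarith

lemma ancestor_valid {j k : ℕ} {m : Fin n → ℕ} (hv : ∀ i, m i < 2 ^ k) (hjk : j ≤ k) :
    ∀ i, m i / 2 ^ (k - j) < 2 ^ j := by
  intro i
  rw [Nat.div_lt_iff_lt_mul (Nat.pow_pos (by norm_num))]
  calc m i < 2 ^ k := hv i
    _ = 2 ^ j * 2 ^ (k - j) := by rw [← pow_add]; congr 1; omega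

def goodSet (Q₀ : Cube n) (g : Cube n → ℝ≥0∞) (T : ℝ≥0∞) : Set (Cube n) :=
  {Q | ∃ k m, (∀ i, m i < 2 ^ k) ∧ Q = Q₀.dyadic k m ∧ T < g Q ∧
    ∀ j, j < k → g (Q₀.dyadic j (fun i => m i / 2 ^ (k - j))) ≤ T}

lemma eq_of_le {Q₀ : Cube n} {g : Cube n → ℝ≥0∞} {T : ℝ≥0∞} {k k' : ℕ}
    {m m' : Fin n → ℕ} {x : Fin n → ℝ} (hkk : k ≤ k')
    (hx : x ∈ (Q₀.dyadic k m).set) (hx' : x ∈ (Q₀.dyadic k' m').set)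
    (hg : T < g (Q₀.dyadic k m))
    (hmin' : ∀ j, j < k' → g (Q₀.dyadic j (fun i => m' i / 2 ^ (k' - j))) ≤ T) :
    Q₀.dyadic k m = Q₀.dyadic k' m' := by
  rcases eq_or_lt_of_le hkk with rfl | hlt
  · rw [eq_of_mem_same hx hx']
  · exfalso
    have hx2 := subset_ancestor hlt.le m' hx'
    have he := eq_of_mem_same hx hx2
    rw [he] at hg
    exact absurd (hmin' k hlt) hg.not_ge

lemma goodSet_pairwiseDisjoint (Q₀ : Cube n) (g : Cube n → ℝ≥0∞) (T : ℝ≥0∞) :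
    (goodSet Q₀ g T).PairwiseDisjoint Cube.set := by
  rintro Q ⟨k, m, hv, rfl, hg, hmin⟩ Q' ⟨k', m', hv', rfl, hg', hmin'⟩ hne
  rw [Function.onFun, Set.disjoint_left]
  intro x hx hx'
  rcases le_total k k' with h | h
  · exact hne (eq_of_le h hx hx' hg hmin')
  · exact hne (eq_of_le h hx' hx hg' hmin).symm

lemma exists_mem_goodSet {Q₀ : Cube n} {g : Cube n → ℝ≥0∞} {T : ℝ≥0∞} {x : Fin n → ℝ}
    (h : ∃ k m, (∀ i, m i < 2 ^ k) ∧ x ∈ (Q₀.dyadic k m).set ∧ T < g (Q₀.dyadic k m)) :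
    ∃ Q ∈ goodSet Q₀ g T, x ∈ Q.set := by
  classical
  have hP : ∃ k, ∃ m, (∀ i, m i < 2 ^ k) ∧ x ∈ (Q₀.dyadic k m).set ∧ T < g (Q₀.dyadic k m) := h
  obtain ⟨m, hv, hx, hg⟩ := Nat.find_spec hP
  refine ⟨Q₀.dyadic (Nat.find hP) m, ⟨Nat.find hP, m, hv, rfl, hg, ?_⟩, hx⟩
  intro j hj
  by_contra hcon
  exact Nat.find_min hP hj
    ⟨_, ancestor_valid hv hj.le, subset_ancestor hj.le m hx, lt_of_not_ge hcon⟩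

lemma goodSet_countable (Q₀ : Cube n) (g : Cube n → ℝ≥0∞) (T : ℝ≥0∞) :
    (goodSet Q₀ g T).Countable := by
  refine (Set.countable_range fun p : ℕ × (Fin n → ℕ) => Q₀.dyadic p.1 p.2).mono ?_
  rintro Q ⟨k, m, -, rfl, -⟩
  exact ⟨(k, m), rfl⟩

end CubeAux

/-- **The weak `L^p` norm of the local dyadic sharp maximal function is controlled by the
John–Nirenberg functional.** -/


theorem sharpMaximal_le_jnNorm (n : ℕ) (p : ℝ) (hp : 1 < p)
    (Q₀ : Cube n) (f : (Fin n → ℝ) → ℝ) (hf : Measurable f)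
    (hfint : IntegrableOn f Q₀.set) (hJN : Cube.jnNorm Q₀ p f ≠ ⊤) :
    Cube.wnorm Q₀ p (Cube.sharpMaximal Q₀ f) ≤ Cube.jnNorm Q₀ p f := by
  classical
  rw [Cube.wnorm]
  refine iSup_le fun t => iSup_le fun ht => ?_
  set T := ENNReal.ofReal t with hT
  set g : Cube n → ℝ≥0∞ := fun Q => Cube.avg Q fun y => |f y - Cube.ravg Q f| with hgdef
  set 𝒮 := CubeAux.goodSet Q₀ g T with hS
  have hp0 : (0:ℝ) < p := lt_trans one_pos hp
  have h1p : (0:ℝ) ≤ 1 / p := by positivity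
  have hsub : ∀ R ∈ 𝒮, Q₀.IsDyadicSub R := by
    rintro R ⟨k, m, hv, rfl, -, -⟩; exact ⟨k, m, hv, rfl⟩
  have hdisj := CubeAux.goodSet_pairwiseDisjoint Q₀ g T
  have hcount := CubeAux.goodSet_countable Q₀ g T
  have hcover : {x ∈ Q₀.set | T < Cube.sharpMaximal Q₀ f x} ⊆ ⋃ R ∈ 𝒮, R.set := by
    rintro x ⟨-, hx⟩
    rw [Cube.sharpMaximal] at hx
    simp only [lt_iSup_iff] at hx
    obtain ⟨k, m, ⟨hv, hxm⟩, hlt⟩ := hx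
    obtain ⟨Q, hQ, hxQ⟩ := CubeAux.exists_mem_goodSet (g := g) ⟨k, m, hv, hxm, hlt⟩
    exact Set.mem_biUnion hQ hxQ
  have hmeas : volume {x ∈ Q₀.set | T < Cube.sharpMaximal Q₀ f x}
      ≤ ∑' R : 𝒮, volume (R : Cube n).set :=
    (measure_mono hcover).trans (measure_biUnion_le volume hcount _)
  have hterm : ∀ R : 𝒮, T ^ p * volume (R : Cube n).set
      ≤ g (R : Cube n) ^ p * volume (R : Cube n).set := by
    rintro ⟨R, k, m, hv, rfl, hgR, -⟩
    exact mul_le_mul_left (ENNReal.rpow_le_rpow hgR.le hp0.le) _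
  have key : T ^ p * volume {x ∈ Q₀.set | T < Cube.sharpMaximal Q₀ f x}
      ≤ ∑' R : 𝒮, g (R : Cube n) ^ p * volume (R : Cube n).set := by
    calc T ^ p * volume {x ∈ Q₀.set | T < Cube.sharpMaximal Q₀ f x}
        ≤ T ^ p * ∑' R : 𝒮, volume (R : Cube n).set := mul_le_mul_right hmeas _
      _ = ∑' R : 𝒮, T ^ p * volume (R : Cube n).set := ENNReal.tsum_mul_left.symm
      _ ≤ _ := ENNReal.tsum_le_tsum hterm
  rw [Cube.jnNorm]
  refine le_trans ?_ (le_iSup₂ (f := fun (𝒮' : Set (Cube n))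
      (_ : (∀ R ∈ 𝒮', Q₀.IsDyadicSub R) ∧ 𝒮'.PairwiseDisjoint Cube.set) =>
      ((∑' R : 𝒮', Cube.avg (R : Cube n) (fun x => |f x - Cube.ravg (R : Cube n) f|) ^ p *
        volume (R : Cube n).set) / volume Q₀.set) ^ (1 / p)) 𝒮 ⟨hsub, hdisj⟩)
  have hEq : T * (volume {x ∈ Q₀.set | T < Cube.sharpMaximal Q₀ f x} / volume Q₀.set) ^ (1 / p)
      = (T ^ p * (volume {x ∈ Q₀.set | T < Cube.sharpMaximal Q₀ f x} / volume Q₀.set)) ^ (1 / p) := by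
    rw [ENNReal.mul_rpow_of_nonneg _ _ h1p, ← ENNReal.rpow_mul,
      mul_one_div, div_self hp0.ne', ENNReal.rpow_one]
  rw [hEq]
  refine ENNReal.rpow_le_rpow ?_ h1p
  rw [← mul_div_assoc]
  exact ENNReal.div_le_div_right key _
end

section
/- Let (X,d,μ) be a metric measure space with μ a Borel regular doubling measure, fix η > 0, a ball B_0 ⊂ X, the family 𝓑 = 𝓑_{B_0}, and let F ∈ L^1(B̂_0) be nonnegative. Assume there are constants Θ ≥ 1, 0 ≤ δ < 1/2 and τ ≥ 1 such that for every B ∈ 𝓑 there exist nonnegative measurable functions H^B, G^B and a constant g^B ≥ 0 satisfying: (i) F ≤ G^B + H^B μ-a.e. on B; (ii) ‖H^B‖_{L^∞(B)} ≤ Θ · (μ-average of F over τB); (iii) (μ-average of G^B over B) ≤ δ · (μ-average of F over τB) + g^B. Define G*_𝓑(x) = sup{ g^B : B ∈ 𝓑, x ∈ B } (zero if no B ∈ 𝓑 contains x). Then there are constants λ_0 = λ_0(τ,η,μ) and C_μ ≥ 1 (depending only on μ) such that for every λ ≥ λ_0·(μ-average of F over B̂_0), every K > max{Θ, c_μ·3^D}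 and every 0 < γ < 1, μ({x ∈ B̂_0 : M_𝓑F(x) > Kλ and G*_𝓑(x) ≤ γλ}) ≤ C_μ ((δ+γ)/(K−Θ)) μ({x ∈ B̂_0 : M_𝓑F(x) > λ}). -/
open MeasureTheory Filter
open scoped ENNReal NNReal Topology

/-- A (metric) ball, which comes with a center and a positive finite radius. -/
structure MBall (X : Type*) where
  center : X
  radius : ℝ
  radius_pos : 0 < radius

namespace MBall

variable {X : Type*} [MetricSpace X] [MeasurableSpace X]

/-- The underlying set of the ball. -/
def set (B : MBall X) : Set X := Metric.ball B.center B.radius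

/-- The `t`-dilate `tB` of the ball `B`. -/
def dilate (B : MBall X) (t : ℝ) (ht : 0 < t) : MBall X :=
  ⟨B.center, t * B.radius, mul_pos ht B.radius_pos⟩

/-- `B̂ := (1+η)B`. -/
def hat (B : MBall X) (η : ℝ) (hη : 0 < η) : MBall X :=
  B.dilate (1 + η) (by linarith)

/-- The family `𝓑 = 𝓑_{B₀} = {B(x_B,r_B) : x_B ∈ B₀, r_B ≤ η r_{B₀}}`. -/
def fam (B₀ : MBall X) (η : ℝ) : Set (MBall X) :=
  {B | B.center ∈ Metric.ball B₀.center B₀.radius ∧ B.radius ≤ η * B₀.radius}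

/-- The `μ`-average `(1/μ(B))∫_B f dμ` of a nonnegative function, valued in `ℝ≥0∞`. -/
noncomputable def avg (μ : Measure X) (B : MBall X) (f : X → ℝ) : ℝ≥0∞ :=
  (∫⁻ x in B.set, ENNReal.ofReal (f x) ∂μ) / μ B.set

/-- The real-valued `μ`-average `f_B = (1/μ(B))∫_B f dμ`. -/
noncomputable def ravg (μ : Measure X) (B : MBall X) (f : X → ℝ) : ℝ :=
  ⨍ x in B.set, f x ∂μ

/-- The maximal operator `M_𝓑` with respect to the basis `𝓑 = 𝓑_{B₀}`
(zero where no ball of the family contains the point). -/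
noncomputable def maximal (μ : Measure X) (B₀ : MBall X) (η : ℝ) (f : X → ℝ) (x : X) :
    ℝ≥0∞ :=
  ⨆ (B : MBall X) (_ : B ∈ fam B₀ η ∧ x ∈ B.set), avg μ B f

/-- `G*_𝓑(x) = sup { g(B) : B ∈ 𝓑, x ∈ B }` (zero where no ball of the family contains
the point). -/
noncomputable def gstar (B₀ : MBall X) (η : ℝ) (g : MBall X → ℝ) (x : X) : ℝ≥0∞ :=
  ⨆ (B : MBall X) (_ : B ∈ fam B₀ η ∧ x ∈ B.set), ENNReal.ofReal (g B)

/-- The normalized weak `L^p` (quasi-)norm on a ball, for an `ℝ≥0∞`-valued function. -/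
noncomputable def wnorm (μ : Measure X) (B : MBall X) (p : ℝ) (f : X → ℝ≥0∞) : ℝ≥0∞ :=
  ⨆ (t : ℝ) (_ : 0 < t),
    ENNReal.ofReal t * (μ {x ∈ B.set | ENNReal.ofReal t < f x} / μ B.set) ^ (1 / p)

/-- The normalized `L^p` norm `((1/μ(B))∫_B f^p dμ)^{1/p}` for an `ℝ≥0∞`-valued function. -/
noncomputable def lpnorm (μ : Measure X) (B : MBall X) (p : ℝ) (f : X → ℝ≥0∞) : ℝ≥0∞ :=
  ((∫⁻ x in B.set, f x ^ p ∂μ) / μ B.set) ^ (1 / p)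

/-- `inf_{c ∈ ℝ} (1/μ(B)) ∫_B |f-c|^ρ dμ`. -/
noncomputable def oscInf (μ : Measure X) (ρ : ℝ) (B : MBall X) (f : X → ℝ) : ℝ≥0∞ :=
  ⨅ c : ℝ, (∫⁻ x in B.set, ENNReal.ofReal (|f x - c| ^ ρ) ∂μ) / μ B.set

/-- The John–Nirenberg functional `‖f‖_{JN^ρ_{p,τ},B}`: the supremum over all families of
balls `{B_i}` with `{τ B_i}` pairwise disjoint and `τ B_i ⊆ B` of
`((1/μ(B)) Σ_i (inf_c ⨍_{B_i} |f-c|^ρ dμ)^{p/ρ} μ(τ B_i))^{1/p}`. -/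
noncomputable def jnNorm (μ : Measure X) (p ρ τ : ℝ) (hτ : 0 < τ) (B : MBall X)
    (f : X → ℝ) : ℝ≥0∞ :=
  ⨆ (I : Set (MBall X)) (_ : (∀ Bi ∈ I, (MBall.dilate Bi τ hτ).set ⊆ B.set) ∧
      I.PairwiseDisjoint (fun Bi => (MBall.dilate Bi τ hτ).set)),
    ((∑' Bi : I, oscInf μ ρ (Bi : MBall X) f ^ (p / ρ) *
        μ ((MBall.dilate (Bi : MBall X) τ hτ).set)) / μ B.set) ^ (1 / p)

/-- `‖a‖_{D_p,B}` for an (extended) nonnegative functional `a` on balls. -/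
noncomputable def dpNorm (μ : Measure X) (p : ℝ) (B : MBall X) (a : MBall X → ℝ≥0∞) :
    ℝ≥0∞ :=
  (⨆ (I : Set (MBall X)) (_ : (∀ Bi ∈ I, (Bi : MBall X).set ⊆ B.set) ∧
      I.PairwiseDisjoint MBall.set),
    ((∑' Bi : I, a (Bi : MBall X) ^ p * μ (Bi : MBall X).set) / μ B.set) ^ (1 / p)) / a B

/-- `‖a‖_{D_p(B₀)} = sup_{B ⊆ B₀} ‖a‖_{D_p,B}`. -/
noncomputable def dpGlobal (μ : Measure X) (p : ℝ) (B₀ : MBall X) (a : MBall X → ℝ≥0∞) :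
    ℝ≥0∞ :=
  ⨆ (B : MBall X) (_ : B.set ⊆ B₀.set), dpNorm μ p B a

end MBall

set_option maxHeartbeats 4000000

namespace MBall

variable {X : Type*} [MetricSpace X] [MeasurableSpace X]

set_option linter.unusedSectionVars false

lemma mem_set_self (B : MBall X) : B.center ∈ B.set := Metric.mem_ball_self B.radius_pos

lemma set_nonempty (B : MBall X) : B.set.Nonempty := ⟨B.center, B.mem_set_self⟩

lemma mem_set_iff {B : MBall X} {z : X} : z ∈ B.set ↔ dist z B.center < B.radius :=
  Metric.mem_ball

lemma measurableSet_set [BorelSpace X] (B : MBall X) : MeasurableSet B.set :=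
  Metric.isOpen_ball.measurableSet

lemma set_subset_dilate (B : MBall X) {t : ℝ} (ht0 : 0 < t) (ht : 1 ≤ t) :
    B.set ⊆ (B.dilate t ht0).set := by
  intro z hz
  rw [mem_set_iff] at hz ⊢
  have := B.radius_pos
  show dist z B.center < t * B.radius
  nlinarith

lemma mem_dilate_of_mem {B : MBall X} {z : X} (hz : z ∈ B.set) {t : ℝ} (ht0 : 0 < t)
    (ht : 1 ≤ t) : z ∈ (B.dilate t ht0).set := set_subset_dilate B ht0 ht hz

lemma fam_subset_hat {η : ℝ} (hη : 0 < η) (B₀ : MBall X) {B : MBall X}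
    (hB : B ∈ fam B₀ η) : B.set ⊆ (B₀.hat η hη).set := by
  intro z hz
  rw [mem_set_iff] at hz ⊢
  have h1 : dist B.center B₀.center < B₀.radius := hB.1
  have h2 : B.radius ≤ η * B₀.radius := hB.2
  have h3 := dist_triangle z B.center B₀.center
  show dist z B₀.center < (1 + η) * B₀.radius
  nlinarith

lemma le_maximal (μ : Measure X) (B₀ : MBall X) (η : ℝ) (f : X → ℝ) {B : MBall X}
    (hB : B ∈ fam B₀ η) {x : X} (hx : x ∈ B.set) : avg μ B f ≤ maximal μ B₀ η f x := by
  show avg μ B f ≤ ⨆ (B : MBall X) (_ : B ∈ fam B₀ η ∧ x ∈ B.set), avg μ B f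
  exact le_iSup₂ (f := fun (B : MBall X) (_ : B ∈ fam B₀ η ∧ x ∈ B.set) => avg μ B f) B ⟨hB, hx⟩

lemma le_gstar (B₀ : MBall X) (η : ℝ) (g : MBall X → ℝ) {B : MBall X}
    (hB : B ∈ fam B₀ η) {x : X} (hx : x ∈ B.set) : ENNReal.ofReal (g B) ≤ gstar B₀ η g x :=
  le_iSup₂ (f := fun (B : MBall X) (_ : B ∈ fam B₀ η ∧ x ∈ B.set) => ENNReal.ofReal (g B)) B
    ⟨hB, hx⟩

lemma maximal_le (μ : Measure X) (B₀ : MBall X) (η : ℝ) (f : X → ℝ) (x : X) {c : ℝ≥0∞}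
    (h : ∀ B : MBall X, B ∈ fam B₀ η → x ∈ B.set → avg μ B f ≤ c) :
    maximal μ B₀ η f x ≤ c := by
  refine iSup_le fun B => iSup_le fun hB => h B hB.1 hB.2

end MBall

-- countability helper
lemma aux_countable {α ι : Type*} [MeasurableSpace α] (μ : MeasureTheory.Measure α)
    (u : Set ι) (s : ι → Set α) (hmeas : ∀ i ∈ u, MeasurableSet (s i))
    (hdisj : u.PairwiseDisjoint s) (hposm : ∀ i ∈ u, 0 < μ (s i)) (Ω : Set α)
    (hsub : ∀ i ∈ u, s i ⊆ Ω) (hΩ : μ Ω ≠ ⊤) : u.Countable := by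
  have h := MeasureTheory.Measure.countable_meas_pos_of_disjoint_of_meas_iUnion_ne_top
    (μ := μ) (As := fun i : u => s i) (fun i => hmeas i i.2)
    (fun i j hij => hdisj i.2 j.2 fun h => hij (Subtype.ext h))
    (by
      refine ne_top_of_le_ne_top hΩ (MeasureTheory.measure_mono ?_)
      exact Set.iUnion_subset fun i => hsub i i.2)
  have heq : {i : u | 0 < μ (s i)} = Set.univ := Set.eq_univ_of_forall fun i => hposm i i.2
  rw [heq] at h
  haveI : Countable u := Set.countable_univ_iff.mp h
  exact Set.countable_coe_iff.mp inferInstance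


/-- **Good-λ inequality in spaces of homogeneous type.** -/
theorem good_lambda_metric
    {X : Type*} [MetricSpace X] [MeasurableSpace X] [BorelSpace X]
    (μ : Measure X) [μ.Regular] (cμ D : ℝ) (hcμ : 0 < cμ) (hD : 0 < D)
    (hdoubling : ∀ B B' : MBall X, B.set ⊆ B'.set → B.radius ≤ B'.radius →
      μ B'.set ≤ ENNReal.ofReal (cμ * (B'.radius / B.radius) ^ D) * μ B.set)
    (hpos : ∀ B : MBall X, 0 < μ B.set) (hfin : ∀ B : MBall X, μ B.set < ⊤)
    (η : ℝ) (hη : 0 < η) (B₀ : MBall X)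
    (F : X → ℝ) (hF : Measurable F) (hFnn : ∀ x, 0 ≤ F x)
    (hFint : IntegrableOn F (B₀.hat η hη).set μ)
    (Θ δ τ : ℝ) (hΘ : 1 ≤ Θ) (hδ0 : 0 ≤ δ) (hδ1 : δ < 1 / 2) (hτ : 1 ≤ τ)
    (H G : MBall X → X → ℝ) (g : MBall X → ℝ)
    (hHmeas : ∀ B, Measurable (H B)) (hGmeas : ∀ B, Measurable (G B))
    (hHnn : ∀ B x, 0 ≤ H B x) (hGnn : ∀ B x, 0 ≤ G B x) (hgnn : ∀ B, 0 ≤ g B)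
    (h1 : ∀ B ∈ MBall.fam B₀ η,
      ∀ᵐ x ∂(μ.restrict (MBall.set B)), F x ≤ G B x + H B x)
    (h2 : ∀ B ∈ MBall.fam B₀ η,
      eLpNorm (H B) ⊤ (μ.restrict (MBall.set B))
        ≤ ENNReal.ofReal Θ *
          MBall.avg μ (MBall.dilate B τ (zero_lt_one.trans_le hτ)) F)
    (h3 : ∀ B ∈ MBall.fam B₀ η,
      MBall.avg μ B (G B)
        ≤ ENNReal.ofReal δ *
            MBall.avg μ (MBall.dilate B τ (zero_lt_one.trans_le hτ)) F
          + ENNReal.ofReal (g B)) :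
    ∃ lam₀ Cμ : ℝ, 0 < lam₀ ∧ 1 ≤ Cμ ∧
      ∀ lam K γ : ℝ,
        ENNReal.ofReal lam₀ * MBall.avg μ (B₀.hat η hη) F ≤ ENNReal.ofReal lam →
        max Θ (cμ * 3 ^ D) < K → 0 < γ → γ < 1 →
        μ {x ∈ (B₀.hat η hη).set | ENNReal.ofReal (K * lam) < MBall.maximal μ B₀ η F x ∧
              MBall.gstar B₀ η g x ≤ ENNReal.ofReal (γ * lam)}
          ≤ ENNReal.ofReal (Cμ * ((δ + γ) / (K - Θ))) *
            μ {x ∈ (B₀.hat η hη).set | ENNReal.ofReal lam < MBall.maximal μ B₀ η F x} := by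
  classical
  have hτ0 : (0:ℝ) < τ := zero_lt_one.trans_le hτ
  have hr₀ : 0 < B₀.radius := B₀.radius_pos
  set s0 : ℝ := 13 * τ * (1 + η) / η with hs0def
  have hs0 : 0 < s0 := by positivity
  set lam₀ : ℝ := cμ * s0 ^ D with hlam₀def
  have hlam₀pos : 0 < lam₀ := by
    have := Real.rpow_pos_of_pos hs0 D
    positivity
  set Cμ : ℝ := max 1 (cμ ^ 2 * 65 ^ D) with hCμdef
  refine ⟨lam₀, Cμ, hlam₀pos, le_max_left _ _, ?_⟩
  intro lam K γ hlam hK hγ0 hγ1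
  set Bh : MBall X := B₀.hat η hη with hBhdef
  have hBhrad : Bh.radius = (1 + η) * B₀.radius := rfl
  have hμ0 : μ Bh.set ≠ 0 := (hpos Bh).ne'
  have hμt : μ Bh.set ≠ ⊤ := (hfin Bh).ne
  set I₀ : ℝ≥0∞ := ∫⁻ x in Bh.set, ENNReal.ofReal (F x) ∂μ with hI₀def
  have havg₀ : MBall.avg μ Bh F = I₀ / μ Bh.set := rfl
  have hKΘ : Θ < K := (le_max_left _ _).trans_lt hK
  have hK1 : (1:ℝ) < K := lt_of_le_of_lt hΘ hKΘ
  -- trivial case: F vanishes a.e. on B̂₀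
  by_cases hI0 : I₀ = 0
  · have hM : ∀ x, MBall.maximal μ B₀ η F x = 0 := by
      intro x
      refine le_antisymm (MBall.maximal_le μ B₀ η F x fun B hB _ => ?_) (by simp)
      have hz : (∫⁻ x in B.set, ENNReal.ofReal (F x) ∂μ) = 0 :=
        le_antisymm ((lintegral_mono_set (MBall.fam_subset_hat hη B₀ hB)).trans hI0.le)
          (by simp)
      simp [MBall.avg, hz]
    have hempty : {x ∈ Bh.set | ENNReal.ofReal (K * lam) < MBall.maximal μ B₀ η F x ∧
        MBall.gstar B₀ η g x ≤ ENNReal.ofReal (γ * lam)} = ∅ := by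
      refine Set.eq_empty_iff_forall_notMem.mpr fun x hx => ?_
      have := hx.2.1
      rw [hM x] at this
      simp at this
    rw [hempty]
    simp
  -- main case
  · have ha0 : I₀ / μ Bh.set ≠ 0 := (ENNReal.div_pos hI0 hμt).ne'
    have hIfin : I₀ ≠ ⊤ := by
      have heq : I₀ = ∫⁻ x in Bh.set, ‖F x‖ₑ ∂μ :=
        lintegral_congr fun x => (Real.enorm_eq_ofReal (hFnn x)).symm
      rw [heq]
      exact hFint.2.ne
    have haT : I₀ / μ Bh.set ≠ ⊤ := (ENNReal.div_lt_top hIfin hμ0).ne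
    have hlam' : ENNReal.ofReal lam₀ * (I₀ / μ Bh.set) ≤ ENNReal.ofReal lam := hlam
    have hlam0 : 0 < lam := by
      have h1' : (0:ℝ≥0∞) < ENNReal.ofReal lam₀ * (I₀ / μ Bh.set) :=
        ENNReal.mul_pos (by simpa [ENNReal.ofReal_eq_zero, not_le] using hlam₀pos) ha0
      exact ENNReal.ofReal_pos.mp (h1'.trans_le hlam')
    set R : ℝ := η * B₀.radius / (13 * τ) with hRdef
    have hRpos : 0 < R := by positivity
    have hRle : 13 * τ * R ≤ η * B₀.radius := by
      rw [hRdef]; field_simp; exact le_rfl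
    -- radius bound for any ball in the family with large average
    have hrad : ∀ B : MBall X, B ∈ MBall.fam B₀ η → ENNReal.ofReal lam < MBall.avg μ B F →
        B.radius < R := by
      intro B hB havg
      have hμB0 : μ B.set ≠ 0 := (hpos B).ne'
      have hμBt : μ B.set ≠ ⊤ := (hfin B).ne
      have hBr : 0 < B.radius := B.radius_pos
      have h2' : ENNReal.ofReal lam * μ B.set < ∫⁻ x in B.set, ENNReal.ofReal (F x) ∂μ :=
        (ENNReal.lt_div_iff_mul_lt (Or.inl hμB0) (Or.inl hμBt)).mp havg
      have h3' : (∫⁻ x in B.set, ENNReal.ofReal (F x) ∂μ) ≤ I₀ :=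
        lintegral_mono_set (MBall.fam_subset_hat hη B₀ hB)
      have h4' : I₀ = I₀ / μ Bh.set * μ Bh.set := (ENNReal.div_mul_cancel hμ0 hμt).symm
      have h5' : μ Bh.set ≤ ENNReal.ofReal (cμ * (Bh.radius / B.radius) ^ D) * μ B.set := by
        refine hdoubling B Bh (MBall.fam_subset_hat hη B₀ hB) ?_
        rw [hBhrad]
        have := hB.2
        nlinarith
      have hchain : ENNReal.ofReal lam₀ * (I₀ / μ Bh.set) * μ B.set <
          ENNReal.ofReal (cμ * (Bh.radius / B.radius) ^ D) * (I₀ / μ Bh.set) * μ B.set := by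
        calc ENNReal.ofReal lam₀ * (I₀ / μ Bh.set) * μ B.set
            ≤ ENNReal.ofReal lam * μ B.set := mul_le_mul_left hlam' _
          _ < ∫⁻ x in B.set, ENNReal.ofReal (F x) ∂μ := h2'
          _ ≤ I₀ := h3'
          _ = I₀ / μ Bh.set * μ Bh.set := h4'
          _ ≤ I₀ / μ Bh.set *
              (ENNReal.ofReal (cμ * (Bh.radius / B.radius) ^ D) * μ B.set) :=
            mul_le_mul_right h5' _
          _ = ENNReal.ofReal (cμ * (Bh.radius / B.radius) ^ D) * (I₀ / μ Bh.set) * μ B.set := by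
            ring
      have h6' : ENNReal.ofReal lam₀ < ENNReal.ofReal (cμ * (Bh.radius / B.radius) ^ D) :=
        (ENNReal.mul_lt_mul_iff_left ha0 haT).mp
          ((ENNReal.mul_lt_mul_iff_left hμB0 hμBt).mp hchain)
      have hc'pos : 0 < cμ * (Bh.radius / B.radius) ^ D := by
        have : 0 < Bh.radius / B.radius := by
          rw [hBhrad]; positivity
        have := Real.rpow_pos_of_pos this D
        positivity
      have h8' : lam₀ < cμ * (Bh.radius / B.radius) ^ D :=
        (ENNReal.ofReal_lt_ofReal_iff hc'pos).mp h6'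
      have h9' : s0 ^ D < (Bh.radius / B.radius) ^ D := by
        rw [hlam₀def] at h8'
        exact lt_of_mul_lt_mul_left h8' hcμ.le
      have h10' : s0 < Bh.radius / B.radius := by
        by_contra hcon
        push_neg at hcon
        have hq : 0 ≤ Bh.radius / B.radius := by rw [hBhrad]; positivity
        exact absurd (Real.rpow_le_rpow hq hcon hD.le) (not_le.mpr h9')
      rw [lt_div_iff₀ hBr] at h10'
      -- h10' : s0 * B.radius < Bh.radius
      rw [hs0def, hBhrad] at h10'
      rw [hRdef, lt_div_iff₀ (by positivity : (0:ℝ) < 13 * τ)]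
      have hd : 13 * τ * (1 + η) * B.radius < (1 + η) * B₀.radius * η := by
        rw [div_mul_eq_mul_div, div_lt_iff₀ hη] at h10'
        linarith
      nlinarith [hBr, hη, hr₀, hτ0]
    -- the bad and good sets
    set BAD : Set X := {x ∈ Bh.set | ENNReal.ofReal (K * lam) < MBall.maximal μ B₀ η F x ∧
        MBall.gstar B₀ η g x ≤ ENNReal.ofReal (γ * lam)} with hBADdef
    set GOOD : Set X := {x ∈ Bh.set | ENNReal.ofReal lam < MBall.maximal μ B₀ η F x}
      with hGOODdef
    -- λ-Calderón–Zygmund type balls at a point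
    set T : X → Set (MBall X) := fun x =>
      {B : MBall X | (B ∈ MBall.fam B₀ η ∧ x ∈ B.set) ∧
        ENNReal.ofReal lam < MBall.avg μ B F} with hTdef
    have hTrad : ∀ x, ∀ B ∈ T x, B.radius < R := fun x B hB => hrad B hB.1.1 hB.2
    -- existence of a K-witness ball at every bad point
    have hwitness : ∀ y : X, ENNReal.ofReal (K * lam) < MBall.maximal μ B₀ η F y →
        ∃ W : MBall X, (W ∈ MBall.fam B₀ η ∧ y ∈ W.set) ∧
          ENNReal.ofReal (K * lam) < MBall.avg μ W F := by
      intro y hy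
      rw [MBall.maximal] at hy
      obtain ⟨W, hW⟩ := lt_iSup_iff.mp hy
      obtain ⟨hWc, hWavg⟩ := lt_iSup_iff.mp hW
      exact ⟨W, hWc, hWavg⟩
    have hKlam_le : ENNReal.ofReal lam ≤ ENNReal.ofReal (K * lam) :=
      ENNReal.ofReal_le_ofReal (by nlinarith)
    -- choice of near-maximal λ-ball at each bad point
    have hchoice : ∀ x : X, ∃ b : MBall X, x ∈ BAD →
        b ∈ T x ∧ ∀ B' ∈ T x, B'.radius ≤ 2 * b.radius := by
      intro x
      by_cases hx : x ∈ BAD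
      · obtain ⟨W, hWc, hWavg⟩ := hwitness x hx.2.1
        have hWT : W ∈ T x := ⟨hWc, lt_of_le_of_lt hKlam_le hWavg⟩
        set S : Set ℝ := (fun B : MBall X => B.radius) '' T x with hSdef
        have hSne : S.Nonempty := ⟨W.radius, W, hWT, rfl⟩
        have hSbdd : BddAbove S := by
          refine ⟨R, fun r hr => ?_⟩
          obtain ⟨B, hB, rfl⟩ := hr
          exact (hTrad x B hB).le
        have hspos : 0 < sSup S := lt_of_lt_of_le W.radius_pos (le_csSup hSbdd ⟨W, hWT, rfl⟩)
        obtain ⟨r, hrS, hrgt⟩ := exists_lt_of_lt_csSup hSne (by linarith : sSup S / 2 < sSup S)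
        obtain ⟨b, hbT, rfl⟩ := hrS
        refine ⟨b, fun _ => ⟨hbT, fun B' hB' => ?_⟩⟩
        have := le_csSup hSbdd ⟨B', hB', rfl⟩
        linarith
      · exact ⟨⟨x, 1, one_pos⟩, fun hx' => absurd hx' hx⟩
    choose bx hbx using hchoice
    have hbxT : ∀ x ∈ BAD, bx x ∈ T x := fun x hx => (hbx x hx).1
    have hbxmax : ∀ x ∈ BAD, ∀ B' ∈ T x, B'.radius ≤ 2 * (bx x).radius :=
      fun x hx => (hbx x hx).2
    have hbxfam : ∀ x ∈ BAD, bx x ∈ MBall.fam B₀ η := fun x hx => (hbxT x hx).1.1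
    have hbxmem : ∀ x ∈ BAD, x ∈ (bx x).set := fun x hx => (hbxT x hx).1.2
    have hbxrad : ∀ x ∈ BAD, (bx x).radius < R := fun x hx => hTrad x _ (hbxT x hx)
    -- stopping property
    have hstop : ∀ x ∈ BAD, ∀ B' : MBall X, B' ∈ MBall.fam B₀ η → x ∈ B'.set →
        2 * (bx x).radius < B'.radius → MBall.avg μ B' F ≤ ENNReal.ofReal lam := by
      intro x hx B' hB'fam hB'mem hB'rad
      by_contra hcon
      push_neg at hcon
      exact absurd (hbxmax x hx B' ⟨⟨hB'fam, hB'mem⟩, hcon⟩) (not_le.mpr hB'rad)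
    -- Vitali covering of BAD
    obtain ⟨u, hu_sub, hu_disj, hu_cov⟩ :=
      Vitali.exists_disjoint_subfamily_covering_enlargement
        (fun x : X => (bx x).set) BAD (fun x => (bx x).radius) 2 one_lt_two
        (fun x _ => (bx x).radius_pos.le) R (fun x hx => (hbxrad x hx).le)
        (fun x _ => (bx x).set_nonempty)
    have hu_cnt : u.Countable :=
      aux_countable μ u (fun x => (bx x).set) (fun i _ => (bx i).measurableSet_set)
        hu_disj (fun i _ => hpos _) Bh.set
        (fun i hi => MBall.fam_subset_hat hη B₀ (hbxfam i (hu_sub hi))) hμt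
    set SS : X → Set X := fun i =>
      {y ∈ BAD | ((bx y).set ∩ (bx i).set).Nonempty ∧ (bx y).radius ≤ 2 * (bx i).radius}
      with hSSdef
    have hBADcov : BAD ⊆ ⋃ i ∈ u, SS i := by
      intro y hy
      obtain ⟨i, hi, hint, hle⟩ := hu_cov y hy
      exact Set.mem_biUnion hi ⟨hy, hint, hle⟩
    have hKΘ' : (0:ℝ) < K - Θ := by linarith
    have hΘ0 : (0:ℝ) < Θ := by linarith
    -- the key local estimate
    have hkey : ∀ i ∈ u, μ (SS i) ≤ ENNReal.ofReal (Cμ * ((δ + γ) / (K - Θ))) *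
        μ (bx i).set := by
      intro i hiu
      have hiBAD : i ∈ BAD := hu_sub hiu
      have hir : 0 < (bx i).radius := (bx i).radius_pos
      have hirR : (bx i).radius < R := hbxrad i hiBAD
      set B13 : MBall X := (bx i).dilate 13 (by norm_num) with hB13def
      have hB13rad : B13.radius = 13 * (bx i).radius := rfl
      have hB13c : B13.center = (bx i).center := rfl
      have hB13fam : B13 ∈ MBall.fam B₀ η := by
        refine ⟨(hbxfam i hiBAD).1, ?_⟩
        rw [hB13rad]
        nlinarith [hRle, hτ]
      set B13τ : MBall X := B13.dilate τ (zero_lt_one.trans_le hτ) with hB13τdef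
      have hB13τfam : B13τ ∈ MBall.fam B₀ η := by
        refine ⟨(hbxfam i hiBAD).1, ?_⟩
        show τ * (13 * (bx i).radius) ≤ η * B₀.radius
        nlinarith [hRle]
      have hiB13τ : i ∈ B13τ.set := by
        have := hbxmem i hiBAD
        rw [MBall.mem_set_iff] at this ⊢
        show dist i (bx i).center < τ * (13 * (bx i).radius)
        nlinarith
      have hstop13τ : MBall.avg μ B13τ F ≤ ENNReal.ofReal lam := by
        refine hstop i hiBAD B13τ hB13τfam hiB13τ ?_
        show 2 * (bx i).radius < τ * (13 * (bx i).radius)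
        nlinarith
      have hH13 : eLpNorm (H B13) ⊤ (μ.restrict B13.set) ≤
          ENNReal.ofReal Θ * ENNReal.ofReal lam :=
        (h2 B13 hB13fam).trans (mul_le_mul_right hstop13τ _)
      have hiB13 : i ∈ B13.set := by
        have := hbxmem i hiBAD
        rw [MBall.mem_set_iff] at this ⊢
        show dist i (bx i).center < 13 * (bx i).radius
        nlinarith
      have hg13 : ENNReal.ofReal (g B13) ≤ ENNReal.ofReal (γ * lam) :=
        (MBall.le_gstar B₀ η g hB13fam hiB13).trans hiBAD.2.2
      have hG13 : MBall.avg μ B13 (G B13) ≤ ENNReal.ofReal ((δ + γ) * lam) := by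
        calc MBall.avg μ B13 (G B13)
            ≤ ENNReal.ofReal δ * MBall.avg μ B13τ F + ENNReal.ofReal (g B13) :=
              h3 B13 hB13fam
          _ ≤ ENNReal.ofReal δ * ENNReal.ofReal lam + ENNReal.ofReal (γ * lam) :=
              add_le_add (mul_le_mul_right hstop13τ _) hg13
          _ = ENNReal.ofReal ((δ + γ) * lam) := by
              rw [← ENNReal.ofReal_mul hδ0, ← ENNReal.ofReal_add (by positivity)
                (by positivity)]
              ring_nf
      have hμ13t : μ B13.set ≠ ⊤ := (hfin B13).ne
      have hμ130 : μ B13.set ≠ 0 := (hpos B13).ne'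
      have hGint : (∫⁻ x in B13.set, ENNReal.ofReal (G B13 x) ∂μ) ≤
          ENNReal.ofReal ((δ + γ) * lam) * μ B13.set := by
        exact (ENNReal.div_le_iff hμ130 hμ13t).mp hG13
      -- per-point witness balls for the level K·lam
      have hWy : ∀ y : X, ∃ W : MBall X, y ∈ SS i →
          y ∈ W.set ∧ W.set ⊆ B13.set ∧ W.radius ≤ R ∧
          ENNReal.ofReal ((K - Θ) * lam) * μ W.set <
            ∫⁻ x in W.set, ENNReal.ofReal (G B13 x) ∂μ := by
        intro y
        by_cases hy : y ∈ SS i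
        · have hyBAD : y ∈ BAD := hy.1
          obtain ⟨W, ⟨hWfam, hWmem⟩, hWavg⟩ := hwitness y hyBAD.2.1
          refine ⟨W, fun _ => ⟨hWmem, ?_, ?_, ?_⟩⟩
          · -- W ⊆ B13
            have hWT : W ∈ T y := ⟨⟨hWfam, hWmem⟩, lt_of_le_of_lt hKlam_le hWavg⟩
            have hWr : W.radius ≤ 2 * (bx y).radius := hbxmax y hyBAD W hWT
            have hbyr : (bx y).radius ≤ 2 * (bx i).radius := hy.2.2
            obtain ⟨w, hw1, hw2⟩ := hy.2.1
            have hdyi : dist y (bx i).center < 5 * (bx i).radius := by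
              have t1 : dist y (bx y).center < (bx y).radius := hbxmem y hyBAD
              have t2 : dist (bx y).center w < (bx y).radius := by
                rw [dist_comm]; exact hw1
              have t3 : dist w (bx i).center < (bx i).radius := hw2
              have := dist_triangle4 y (bx y).center w (bx i).center
              linarith
            intro z hz
            rw [MBall.mem_set_iff] at hz ⊢
            have t4 : dist W.center y < W.radius := by
              rw [dist_comm]; exact hWmem
            have := dist_triangle4 z W.center y (bx i).center
            show dist z (bx i).center < 13 * (bx i).radius
            linarith
          · exact (hrad W hWfam (lt_of_le_of_lt hKlam_le hWavg)).le
          · -- the integral inequality on W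
            have hWsub : W.set ⊆ B13.set := by
              have hWT : W ∈ T y := ⟨⟨hWfam, hWmem⟩, lt_of_le_of_lt hKlam_le hWavg⟩
              have hWr : W.radius ≤ 2 * (bx y).radius := hbxmax y hyBAD W hWT
              have hbyr : (bx y).radius ≤ 2 * (bx i).radius := hy.2.2
              obtain ⟨w, hw1, hw2⟩ := hy.2.1
              have hdyi : dist y (bx i).center < 5 * (bx i).radius := by
                have t1 : dist y (bx y).center < (bx y).radius := hbxmem y hyBAD
                have t2 : dist (bx y).center w < (bx y).radius := by
                  rw [dist_comm]; exact hw1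
                have t3 : dist w (bx i).center < (bx i).radius := hw2
                have := dist_triangle4 y (bx y).center w (bx i).center
                linarith
              intro z hz
              rw [MBall.mem_set_iff] at hz ⊢
              have t4 : dist W.center y < W.radius := by
                rw [dist_comm]; exact hWmem
              have := dist_triangle4 z W.center y (bx i).center
              show dist z (bx i).center < 13 * (bx i).radius
              linarith
            have hμW0 : μ W.set ≠ 0 := (hpos W).ne'
            have hμWt : μ W.set ≠ ⊤ := (hfin W).ne
            have hIW : ENNReal.ofReal (K * lam) * μ W.set <
                ∫⁻ x in W.set, ENNReal.ofReal (F x) ∂μ :=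
              (ENNReal.lt_div_iff_mul_lt (Or.inl hμW0) (Or.inl hμWt)).mp hWavg
            have hFGH : ∀ᵐ x ∂(μ.restrict W.set), F x ≤ G B13 x + H B13 x :=
              ae_restrict_of_ae_restrict_of_subset hWsub (h1 B13 hB13fam)
            have hsplit : (∫⁻ x in W.set, ENNReal.ofReal (F x) ∂μ) ≤
                (∫⁻ x in W.set, ENNReal.ofReal (G B13 x) ∂μ) +
                (∫⁻ x in W.set, ENNReal.ofReal (H B13 x) ∂μ) := by
              rw [← lintegral_add_left ((hGmeas B13).ennreal_ofReal)]
              refine lintegral_mono_ae (hFGH.mono fun x hx => ?_)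
              calc ENNReal.ofReal (F x) ≤ ENNReal.ofReal (G B13 x + H B13 x) :=
                    ENNReal.ofReal_le_ofReal hx
                _ = ENNReal.ofReal (G B13 x) + ENNReal.ofReal (H B13 x) :=
                    ENNReal.ofReal_add (hGnn _ _) (hHnn _ _)
            have hHint : (∫⁻ x in W.set, ENNReal.ofReal (H B13 x) ∂μ) ≤
                ENNReal.ofReal (Θ * lam) * μ W.set := by
              have hess : ∀ᵐ x ∂(μ.restrict W.set), ENNReal.ofReal (H B13 x) ≤
                  eLpNormEssSup (H B13) (μ.restrict W.set) := by
                refine (ENNReal.ae_le_essSup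
                  (fun x => ‖H B13 x‖ₑ)).mono fun x hx => ?_
                refine le_trans (le_of_eq ?_) hx
                rw [Real.enorm_eq_ofReal (hHnn _ _)]
              calc (∫⁻ x in W.set, ENNReal.ofReal (H B13 x) ∂μ)
                  ≤ ∫⁻ _ in W.set, eLpNormEssSup (H B13) (μ.restrict W.set) ∂μ :=
                    lintegral_mono_ae hess
                _ = eLpNormEssSup (H B13) (μ.restrict W.set) * μ W.set :=
                    setLIntegral_const _ _
                _ ≤ ENNReal.ofReal (Θ * lam) * μ W.set := by
                    refine mul_le_mul_left ?_ _
                    have hmono : eLpNormEssSup (H B13) (μ.restrict W.set) ≤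
                        eLpNormEssSup (H B13) (μ.restrict B13.set) :=
                      eLpNormEssSup_mono_measure _
                        (Measure.absolutelyContinuous_of_le
                          (Measure.restrict_mono hWsub le_rfl))
                    refine hmono.trans ?_
                    rw [← eLpNorm_exponent_top, ENNReal.ofReal_mul hΘ0.le]
                    exact hH13
            have hKsplit : ENNReal.ofReal (K * lam) =
                ENNReal.ofReal ((K - Θ) * lam) + ENNReal.ofReal (Θ * lam) := by
              rw [← ENNReal.ofReal_add (by positivity) (by positivity)]
              ring_nf
            have hfinal : ENNReal.ofReal ((K - Θ) * lam) * μ W.set +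
                ENNReal.ofReal (Θ * lam) * μ W.set <
                (∫⁻ x in W.set, ENNReal.ofReal (G B13 x) ∂μ) +
                ENNReal.ofReal (Θ * lam) * μ W.set := by
              calc ENNReal.ofReal ((K - Θ) * lam) * μ W.set +
                  ENNReal.ofReal (Θ * lam) * μ W.set
                  = ENNReal.ofReal (K * lam) * μ W.set := by rw [hKsplit, add_mul]
                _ < ∫⁻ x in W.set, ENNReal.ofReal (F x) ∂μ := hIW
                _ ≤ (∫⁻ x in W.set, ENNReal.ofReal (G B13 x) ∂μ) +
                    (∫⁻ x in W.set, ENNReal.ofReal (H B13 x) ∂μ) := hsplit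
                _ ≤ (∫⁻ x in W.set, ENNReal.ofReal (G B13 x) ∂μ) +
                    ENNReal.ofReal (Θ * lam) * μ W.set := add_le_add_right hHint _
            exact (ENNReal.add_lt_add_iff_right
              (ENNReal.mul_ne_top ENNReal.ofReal_ne_top hμWt)).mp hfinal
        · exact ⟨⟨y, 1, one_pos⟩, fun hy' => absurd hy' hy⟩
      choose wy hwy using hWy
      obtain ⟨v, hv_sub, hv_disj, hv_cov⟩ :=
        Vitali.exists_disjoint_subfamily_covering_enlargement
          (fun y : X => (wy y).set) (SS i) (fun y => (wy y).radius) 2 one_lt_two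
          (fun y _ => (wy y).radius_pos.le) R (fun y hy => (hwy y hy).2.2.1)
          (fun y _ => (wy y).set_nonempty)
      have hv_cnt : v.Countable :=
        aux_countable μ v (fun y => (wy y).set) (fun j _ => (wy j).measurableSet_set)
          hv_disj (fun j _ => hpos _) B13.set (fun j hj => (hwy j (hv_sub hj)).2.1) hμ13t
      haveI : Countable v := hv_cnt.to_subtype
      have hSScov : SS i ⊆ ⋃ j ∈ v, ((wy j).dilate 5 (by norm_num)).set := by
        intro y hy
        obtain ⟨j, hj, hint, hle⟩ := hv_cov y hy
        refine Set.mem_biUnion hj ?_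
        obtain ⟨w, hw1, hw2⟩ := hint
        have t1 : dist y (wy y).center < (wy y).radius := (hwy y hy).1
        have t2 : dist (wy y).center w < (wy y).radius := by rw [dist_comm]; exact hw1
        have t3 : dist w (wy j).center < (wy j).radius := hw2
        have := dist_triangle4 y (wy y).center w (wy j).center
        rw [MBall.mem_set_iff]
        show dist y (wy j).center < 5 * (wy j).radius
        linarith
      have h5W : ∀ j : X, μ ((wy j).dilate 5 (by norm_num : (0:ℝ) < 5)).set ≤
          ENNReal.ofReal (cμ * 5 ^ D) * μ (wy j).set := by
        intro j
        have hr : 0 < (wy j).radius := (wy j).radius_pos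
        have hd5 := hdoubling (wy j) ((wy j).dilate 5 (by norm_num))
          (MBall.set_subset_dilate _ (by norm_num) (by norm_num))
          (by show (wy j).radius ≤ 5 * (wy j).radius; nlinarith)
        have hq : ((wy j).dilate 5 (by norm_num : (0:ℝ) < 5)).radius / (wy j).radius = 5 := by
          show 5 * (wy j).radius / (wy j).radius = 5
          field_simp
        rwa [hq] at hd5
      have hμSS2 : μ (SS i) ≤ ENNReal.ofReal (cμ * 5 ^ D) * ∑' j : v, μ (wy j.1).set := by
        refine ((measure_mono hSScov).trans (measure_biUnion_le μ hv_cnt _)).trans ?_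
        rw [← ENNReal.tsum_mul_left]
        exact ENNReal.tsum_le_tsum fun j => h5W j.1
      have hdisj' : Pairwise (Function.onFun Disjoint fun j : v => (wy j.1).set) :=
        fun j k hjk => hv_disj j.2 k.2 fun h => hjk (Subtype.ext h)
      have hsum3 : ENNReal.ofReal ((K - Θ) * lam) * ∑' j : v, μ (wy j.1).set ≤
          ENNReal.ofReal ((δ + γ) * lam) * μ B13.set := by
        set ν : Measure X := μ.withDensity (fun x => ENNReal.ofReal (G B13 x)) with hνdef
        have hν : ∀ s : Set X, MeasurableSet s → ν s = ∫⁻ x in s, ENNReal.ofReal (G B13 x) ∂μ :=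
          fun s hs => withDensity_apply _ hs
        have e1 : ∀ j : v, ENNReal.ofReal ((K - Θ) * lam) * μ (wy j.1).set ≤ ν (wy j.1).set := by
          intro j
          rw [hν _ (wy j.1).measurableSet_set]
          exact (hwy j.1 (hv_sub j.2)).2.2.2.le
        have e2 : (∑' j : v, ν (wy j.1).set) = ν (⋃ j : v, (wy j.1).set) :=
          (measure_iUnion hdisj' fun j => (wy j.1).measurableSet_set).symm
        have e3 : ν (⋃ j : v, (wy j.1).set) ≤ ν B13.set :=
          measure_mono (Set.iUnion_subset fun j => (hwy j.1 (hv_sub j.2)).2.1)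
        have e4 : ν B13.set ≤ ENNReal.ofReal ((δ + γ) * lam) * μ B13.set := by
          rw [hν _ B13.measurableSet_set]
          exact hGint
        calc ENNReal.ofReal ((K - Θ) * lam) * ∑' j : v, μ (wy j.1).set
            = ∑' j : v, ENNReal.ofReal ((K - Θ) * lam) * μ (wy j.1).set :=
              ENNReal.tsum_mul_left.symm
          _ ≤ ∑' j : v, ν (wy j.1).set := ENNReal.tsum_le_tsum e1
          _ = ν (⋃ j : v, (wy j.1).set) := e2
          _ ≤ ν B13.set := e3
          _ ≤ ENNReal.ofReal ((δ + γ) * lam) * μ B13.set := e4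
      have hKTlam : (0:ℝ) < (K - Θ) * lam := mul_pos hKΘ' hlam0
      have hsum4 : ∑' j : v, μ (wy j.1).set ≤
          ENNReal.ofReal ((δ + γ) / (K - Θ)) * μ B13.set := by
        have hdivle : ∑' j : v, μ (wy j.1).set ≤
            ENNReal.ofReal ((δ + γ) * lam) * μ B13.set / ENNReal.ofReal ((K - Θ) * lam) := by
          refine (ENNReal.le_div_iff_mul_le (Or.inl ?_) (Or.inl ENNReal.ofReal_ne_top)).mpr ?_
          · simpa [ENNReal.ofReal_eq_zero, not_le] using hKTlam
          · rw [mul_comm]; exact hsum3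
        refine hdivle.trans (le_of_eq ?_)
        rw [div_eq_mul_inv, mul_right_comm, ← div_eq_mul_inv,
          ← ENNReal.ofReal_div_of_pos hKTlam]
        congr 2
        rw [mul_div_mul_right _ _ (ne_of_gt hlam0)]
      have hB13μ : μ B13.set ≤ ENNReal.ofReal (cμ * 13 ^ D) * μ (bx i).set := by
        have hd13 := hdoubling (bx i) B13
          (MBall.set_subset_dilate _ (by norm_num) (by norm_num))
          (by rw [hB13rad]; nlinarith)
        have hq : B13.radius / (bx i).radius = 13 := by
          rw [hB13rad]; field_simp
        rwa [hq] at hd13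
      have hc1 : (0:ℝ) ≤ (δ + γ) / (K - Θ) := div_nonneg (by linarith) hKΘ'.le
      calc μ (SS i) ≤ ENNReal.ofReal (cμ * 5 ^ D) *
            (ENNReal.ofReal ((δ + γ) / (K - Θ)) * (ENNReal.ofReal (cμ * 13 ^ D) *
              μ (bx i).set)) := by
            refine hμSS2.trans (mul_le_mul_right (hsum4.trans ?_) _)
            exact mul_le_mul_right hB13μ _
        _ = ENNReal.ofReal (cμ * 5 ^ D * ((δ + γ) / (K - Θ)) * (cμ * 13 ^ D)) *
            μ (bx i).set := by
            rw [ENNReal.ofReal_mul (mul_nonneg (by positivity) hc1),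
              ENNReal.ofReal_mul (by positivity : (0:ℝ) ≤ cμ * 5 ^ D)]
            ring
        _ ≤ ENNReal.ofReal (Cμ * ((δ + γ) / (K - Θ))) * μ (bx i).set := by
            refine mul_le_mul_left (ENNReal.ofReal_le_ofReal ?_) _
            have h65 : (5:ℝ) ^ D * 13 ^ D = 65 ^ D := by
              rw [← Real.mul_rpow (by norm_num) (by norm_num)]; norm_num
            have heq : cμ * 5 ^ D * ((δ + γ) / (K - Θ)) * (cμ * 13 ^ D) =
                cμ ^ 2 * (5 ^ D * 13 ^ D) * ((δ + γ) / (K - Θ)) := by ring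
            rw [heq, h65, hCμdef]
            exact mul_le_mul_of_nonneg_right (le_max_right _ _) hc1
    -- assembly
    calc μ BAD ≤ μ (⋃ i ∈ u, SS i) := measure_mono hBADcov
      _ ≤ ∑' i : u, μ (SS i) := measure_biUnion_le μ hu_cnt _
      _ ≤ ∑' i : u, ENNReal.ofReal (Cμ * ((δ + γ) / (K - Θ))) * μ (bx i.1).set :=
          ENNReal.tsum_le_tsum fun i => hkey i.1 i.2
      _ = ENNReal.ofReal (Cμ * ((δ + γ) / (K - Θ))) * ∑' i : u, μ (bx i.1).set := by
          rw [ENNReal.tsum_mul_left]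
      _ = ENNReal.ofReal (Cμ * ((δ + γ) / (K - Θ))) * μ (⋃ i ∈ u, (bx i).set) := by
          rw [measure_biUnion hu_cnt hu_disj fun i _ => (bx i).measurableSet_set]
      _ ≤ ENNReal.ofReal (Cμ * ((δ + γ) / (K - Θ))) * μ GOOD := by
          refine mul_le_mul_right (measure_mono ?_) _
          refine Set.iUnion₂_subset fun i hi => fun z hz => ?_
          refine ⟨MBall.fam_subset_hat hη B₀ (hbxfam i (hu_sub hi)) hz, ?_⟩
          exact lt_of_lt_of_le (hbxT i (hu_sub hi)).2
            (MBall.le_maximal μ B₀ η F (hbxfam i (hu_sub hi)) hz)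
end

section
/- Let (X,d,μ) be a metric measure space with μ a Borel regular doubling measure, fix η > 0, a ball B_0 ⊂ X, the family 𝓑 = 𝓑_{B_0}, τ ≥ 1 and λ_0 := (15τ)^D c_μ (1 + 1/η)^D. Let F ∈ L^1(B̂_0) be nonnegative and suppose Ω_λ := {x ∈ B̂_0 : M_𝓑F(x) > λ} is nonempty for some λ ≥ λ_0 · (μ-average of F over B̂_0). Then there exists a countable family of pairwise disjoint balls {B_i} such that: (a) ∪_i B_i ⊂ Ω_λ ⊂ ∪_i 5B_i; (b) 15τB_i ∈ 𝓑 for each i; (c) the μ-average of F over B_i exceeds λ for each i; (d) the μ-average of F over σB_i is at most λ whenever σ ≥ 2 and σB_i ∈ 𝓑. -/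
open MeasureTheory Filter
open scoped ENNReal NNReal Topology

set_option linter.unusedSectionVars false
section Aux

open Metric

variable {X : Type*} [MetricSpace X] [MeasurableSpace X]

lemma MBall.set_def (B : MBall X) : B.set = Metric.ball B.center B.radius := rfl

lemma MBall.dilate_set (B : MBall X) (t : ℝ) (ht : 0 < t) :
    (B.dilate t ht).set = Metric.ball B.center (t * B.radius) := rfl

lemma MBall.dilate_radius (B : MBall X) (t : ℝ) (ht : 0 < t) :
    (B.dilate t ht).radius = t * B.radius := rfl

lemma MBall.dilate_center (B : MBall X) (t : ℝ) (ht : 0 < t) :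
    (B.dilate t ht).center = B.center := rfl

lemma MBall.hat_set (B : MBall X) (η : ℝ) (hη : 0 < η) :
    (B.hat η hη).set = Metric.ball B.center ((1 + η) * B.radius) := rfl

lemma MBall.hat_radius (B : MBall X) (η : ℝ) (hη : 0 < η) :
    (B.hat η hη).radius = (1 + η) * B.radius := rfl

lemma MBall.center_mem_set (B : MBall X) : B.center ∈ B.set :=
  Metric.mem_ball_self B.radius_pos

lemma MBall.fam_subset_hat_s15 {B₀ : MBall X} {η : ℝ} (hη : 0 < η) {B : MBall X}
    (hB : B ∈ MBall.fam B₀ η) : B.set ⊆ (B₀.hat η hη).set := by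
  intro y hy
  have h1 : dist B.center B₀.center < B₀.radius := hB.1
  have h2 : dist y B.center < B.radius := hy
  have h3 : B.radius ≤ η * B₀.radius := hB.2
  rw [MBall.hat_set]
  have : dist y B₀.center < (1 + η) * B₀.radius := by
    calc dist y B₀.center ≤ dist y B.center + dist B.center B₀.center := dist_triangle _ _ _
    _ < B.radius + B₀.radius := by linarith
    _ ≤ η * B₀.radius + B₀.radius := by linarith
    _ = (1 + η) * B₀.radius := by ring
  exact this

lemma MBall.le_maximal_s15 {μ : MeasureTheory.Measure X} {B₀ : MBall X} {η : ℝ} {F : X → ℝ}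
    {B : MBall X} (hB : B ∈ MBall.fam B₀ η) {x : X} (hx : x ∈ B.set) :
    MBall.avg μ B F ≤ MBall.maximal μ B₀ η F x :=
  le_iSup₂ (f := fun (B : MBall X) (_ : B ∈ MBall.fam B₀ η ∧ x ∈ B.set) => MBall.avg μ B F)
    B ⟨hB, hx⟩

end Aux

/-- **Calderón–Zygmund type covering lemma (Lemma 7.2).** -/
theorem calderon_zygmund_covering
    {X : Type*} [MetricSpace X] [MeasurableSpace X] [BorelSpace X]
    (μ : Measure X) [μ.Regular] (cμ D : ℝ) (hcμ : 0 < cμ) (hD : 0 < D)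
    (hdoubling : ∀ B B' : MBall X, B.set ⊆ B'.set → B.radius ≤ B'.radius →
      μ B'.set ≤ ENNReal.ofReal (cμ * (B'.radius / B.radius) ^ D) * μ B.set)
    (hpos : ∀ B : MBall X, 0 < μ B.set) (hfin : ∀ B : MBall X, μ B.set < ⊤)
    (η : ℝ) (hη : 0 < η) (B₀ : MBall X) (τ : ℝ) (hτ : 1 ≤ τ)
    (F : X → ℝ) (hF : Measurable F) (hFnn : ∀ x, 0 ≤ F x)
    (hFint : IntegrableOn F (B₀.hat η hη).set μ)
    (lam : ℝ)
    (hlam : ENNReal.ofReal ((15 * τ) ^ D * cμ * (1 + 1 / η) ^ D) *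
        MBall.avg μ (B₀.hat η hη) F ≤ ENNReal.ofReal lam)
    (hne : {x ∈ (B₀.hat η hη).set |
        ENNReal.ofReal lam < MBall.maximal μ B₀ η F x}.Nonempty) :
    ∃ I : Set (MBall X), I.Countable ∧ I.PairwiseDisjoint MBall.set ∧
      (⋃ B ∈ I, MBall.set B)
        ⊆ {x ∈ (B₀.hat η hη).set | ENNReal.ofReal lam < MBall.maximal μ B₀ η F x} ∧
      {x ∈ (B₀.hat η hη).set | ENNReal.ofReal lam < MBall.maximal μ B₀ η F x}
        ⊆ ⋃ B ∈ I, (MBall.dilate B 5 (by norm_num)).set ∧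
      (∀ B ∈ I, MBall.dilate B (15 * τ) (by linarith) ∈ MBall.fam B₀ η) ∧
      (∀ B ∈ I, ENNReal.ofReal lam < MBall.avg μ B F) ∧
      (∀ B ∈ I, ∀ (σ : ℝ) (hσ : 0 < σ), 2 ≤ σ →
        MBall.dilate B σ hσ ∈ MBall.fam B₀ η →
        MBall.avg μ (MBall.dilate B σ hσ) F ≤ ENNReal.ofReal lam) := by
  classical
  set Bh := B₀.hat η hη with hBhdef
  set Om := {x ∈ Bh.set | ENNReal.ofReal lam < MBall.maximal μ B₀ η F x} with hOmdef
  have hr0 : 0 < B₀.radius := B₀.radius_pos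
  have ht0 : (0:ℝ) < 15 * τ := by linarith
  have h1η : (0:ℝ) < 1 + 1 / η := by
    have := one_div_pos.mpr hη; linarith
  -- Key size bound: big balls in the family have small average.
  have key : ∀ B ∈ MBall.fam B₀ η, η * B₀.radius / (15 * τ) ≤ B.radius →
      MBall.avg μ B F ≤ ENNReal.ofReal lam := by
    intro B hB hrB
    have hrpos := B.radius_pos
    have hμB0 := (hpos B).ne'
    have hμBt := (hfin B).ne
    have hμh0 := (hpos Bh).ne'
    have hμht := (hfin Bh).ne
    have hsubB : B.set ⊆ Bh.set := MBall.fam_subset_hat_s15 hη hB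
    have hIle : (∫⁻ x in B.set, ENNReal.ofReal (F x) ∂μ)
        ≤ ∫⁻ x in Bh.set, ENNReal.ofReal (F x) ∂μ := lintegral_mono_set hsubB
    have hrle : B.radius ≤ Bh.radius := by
      rw [hBhdef, MBall.hat_radius]
      have := hB.2; nlinarith
    have hdb := hdoubling B Bh hsubB hrle
    -- the real inequality
    have hq : Bh.radius / B.radius ≤ 15 * τ * (1 + 1 / η) := by
      rw [hBhdef, MBall.hat_radius, div_le_iff₀ hrpos]
      have h1 : η * B₀.radius ≤ B.radius * (15 * τ) := (div_le_iff₀ ht0).mp hrB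
      have h3 : 15 * τ * (1 + 1 / η) * B.radius = (1 + η) * (B.radius * (15 * τ)) / η := by
        field_simp; ring
      rw [h3, le_div_iff₀ hη]
      calc (1 + η) * B₀.radius * η = (1 + η) * (η * B₀.radius) := by ring
      _ ≤ (1 + η) * (B.radius * (15 * τ)) := by nlinarith
    have hrealineq : cμ * (Bh.radius / B.radius) ^ D ≤ (15 * τ) ^ D * cμ * (1 + 1 / η) ^ D := by
      have hb0 : (0:ℝ) ≤ Bh.radius / B.radius := div_nonneg Bh.radius_pos.le hrpos.le
      have h2 : (Bh.radius / B.radius) ^ D ≤ (15 * τ * (1 + 1 / η)) ^ D :=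
        Real.rpow_le_rpow hb0 hq hD.le
      have h3 : (15 * τ * (1 + 1 / η)) ^ D = (15 * τ) ^ D * (1 + 1 / η) ^ D :=
        Real.mul_rpow (by positivity) (by positivity)
      calc cμ * (Bh.radius / B.radius) ^ D ≤ cμ * ((15 * τ) ^ D * (1 + 1 / η) ^ D) := by
            rw [← h3]; exact mul_le_mul_of_nonneg_left h2 hcμ.le
      _ = (15 * τ) ^ D * cμ * (1 + 1 / η) ^ D := by ring
    -- ENNReal chain
    have havgh : (∫⁻ x in Bh.set, ENNReal.ofReal (F x) ∂μ) = MBall.avg μ Bh F * μ Bh.set :=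
      (ENNReal.div_mul_cancel hμh0 hμht).symm
    have hchain : (∫⁻ x in B.set, ENNReal.ofReal (F x) ∂μ)
        ≤ (ENNReal.ofReal (cμ * (Bh.radius / B.radius) ^ D) * MBall.avg μ Bh F) * μ B.set := by
      calc (∫⁻ x in B.set, ENNReal.ofReal (F x) ∂μ)
          ≤ ∫⁻ x in Bh.set, ENNReal.ofReal (F x) ∂μ := hIle
      _ = MBall.avg μ Bh F * μ Bh.set := havgh
      _ ≤ MBall.avg μ Bh F * (ENNReal.ofReal (cμ * (Bh.radius / B.radius) ^ D) * μ B.set) :=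
            mul_le_mul_right hdb _
      _ = (ENNReal.ofReal (cμ * (Bh.radius / B.radius) ^ D) * MBall.avg μ Bh F) * μ B.set := by
            ring
    have h4 : MBall.avg μ B F
        ≤ ENNReal.ofReal (cμ * (Bh.radius / B.radius) ^ D) * MBall.avg μ Bh F :=
      (ENNReal.div_le_iff_le_mul (Or.inl hμB0) (Or.inl hμBt)).mpr hchain
    calc MBall.avg μ B F
        ≤ ENNReal.ofReal (cμ * (Bh.radius / B.radius) ^ D) * MBall.avg μ Bh F := h4
    _ ≤ ENNReal.ofReal ((15 * τ) ^ D * cμ * (1 + 1 / η) ^ D) * MBall.avg μ Bh F :=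
          mul_le_mul_left (ENNReal.ofReal_le_ofReal hrealineq) _
    _ ≤ ENNReal.ofReal lam := hlam
  -- the family of selected balls
  set t : Set (MBall X) := {B | B ∈ MBall.fam B₀ η ∧ ENNReal.ofReal lam < MBall.avg μ B F ∧
      ∀ (σ : ℝ) (hσ : 0 < σ), 2 ≤ σ → MBall.dilate B σ hσ ∈ MBall.fam B₀ η →
        MBall.avg μ (MBall.dilate B σ hσ) F ≤ ENNReal.ofReal lam} with htdef
  -- every point of Om lies in some ball of t
  have hcover : ∀ x ∈ Om, ∃ B ∈ t, x ∈ B.set := by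
    intro x hx
    obtain ⟨hxh, hxM⟩ := hx
    rw [MBall.maximal] at hxM
    obtain ⟨B1, hB1⟩ := lt_iSup_iff.mp hxM
    obtain ⟨hB1mem, hB1lt⟩ := lt_iSup_iff.mp hB1
    set s : Set ℝ := {r | ∃ B : MBall X,
      (B ∈ MBall.fam B₀ η ∧ x ∈ B.set ∧ ENNReal.ofReal lam < MBall.avg μ B F) ∧
      B.radius = r} with hsdef
    have hB1s : B1.radius ∈ s := ⟨B1, ⟨hB1mem.1, hB1mem.2, hB1lt⟩, rfl⟩
    have hsne : s.Nonempty := ⟨B1.radius, hB1s⟩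
    have hsbdd : BddAbove s := ⟨η * B₀.radius, by
      rintro r ⟨B, ⟨hBf, -, -⟩, rfl⟩; exact hBf.2⟩
    set R := sSup s with hRdef
    have hRpos : 0 < R := lt_of_lt_of_le B1.radius_pos (le_csSup hsbdd hB1s)
    obtain ⟨r, hrs, hrR⟩ := exists_lt_of_lt_csSup hsne (by linarith : R / 2 < R)
    obtain ⟨B, ⟨hBf, hBx, hBavg⟩, rfl⟩ := hrs
    refine ⟨B, ⟨hBf, hBavg, ?_⟩, hBx⟩
    intro σ hσ hσ2 hσfam
    by_contra hcon
    push_neg at hcon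
    have hxd : x ∈ (MBall.dilate B σ hσ).set := by
      rw [MBall.dilate_set]
      exact Metric.ball_subset_ball (by nlinarith [B.radius_pos]) hBx
    have hmem : (MBall.dilate B σ hσ).radius ∈ s :=
      ⟨MBall.dilate B σ hσ, ⟨hσfam, hxd, hcon⟩, rfl⟩
    have h1 : σ * B.radius ≤ R := le_csSup hsbdd hmem
    nlinarith [B.radius_pos]
  -- balls of t are contained in Om
  have htOm : ∀ B ∈ t, B.set ⊆ Om := by
    intro B hB y hy
    refine ⟨MBall.fam_subset_hat_s15 hη hB.1 hy, lt_of_lt_of_le hB.2.1 ?_⟩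
    exact MBall.le_maximal_s15 hB.1 hy
  -- Vitali
  obtain ⟨u, hut, hdisj, hVit⟩ :=
    Vitali.exists_disjoint_subfamily_covering_enlargement MBall.set t MBall.radius 2
      one_lt_two (fun a _ => a.radius_pos.le) (η * B₀.radius) (fun a ha => ha.1.2)
      (fun a _ => ⟨a.center, a.center_mem_set⟩)
  -- countability
  have hcnt : u.Countable := by
    have hmeas : Set.Countable {i : u | 0 < μ ((i : MBall X).set)} := by
      refine Measure.countable_meas_pos_of_disjoint_of_meas_iUnion_ne_top μ
        (fun i => Metric.isOpen_ball.measurableSet) ?_ ?_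
      · intro i j hij
        exact hdisj i.2 j.2 (fun h => hij (Subtype.coe_injective h))
      · refine ne_top_of_le_ne_top (hfin Bh).ne (measure_mono ?_)
        refine Set.iUnion_subset fun i => MBall.fam_subset_hat_s15 hη ((hut i.2).1)
    have : Set.Countable (Set.univ : Set u) :=
      hmeas.mono (fun i _ => hpos (i : MBall X))
    exact Set.countable_coe_iff.mp (Set.countable_univ_iff.mp this)
  refine ⟨u, hcnt, hdisj, ?_, ?_, ?_, ?_, ?_⟩
  · exact Set.iUnion₂_subset fun B hB => htOm B (hut hB)
  · -- Om ⊆ union of 5-dilates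
    intro x hx
    obtain ⟨B, hBt, hxB⟩ := hcover x hx
    obtain ⟨b, hbu, ⟨z, hz1, hz2⟩, hrad⟩ := hVit B hBt
    refine Set.mem_iUnion₂.mpr ⟨b, hbu, ?_⟩
    rw [MBall.dilate_set]
    have h1 : dist x B.center < B.radius := hxB
    have h2 : dist z B.center < B.radius := hz1
    have h3 : dist z b.center < b.radius := hz2
    have hbr := b.radius_pos
    calc dist x b.center ≤ dist x B.center + dist B.center z + dist z b.center :=
          dist_triangle4 _ _ _ _
    _ < B.radius + B.radius + b.radius := by
          rw [dist_comm B.center z]; linarith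
    _ ≤ 5 * b.radius := by linarith
  · -- 15τ-dilates belong to the family
    intro B hBu
    have hBt := hut hBu
    have hsmall : B.radius < η * B₀.radius / (15 * τ) := by
      by_contra hcon
      push_neg at hcon
      exact absurd (key B hBt.1 hcon) (not_le.mpr hBt.2.1)
    refine ⟨hBt.1.1, ?_⟩
    rw [MBall.dilate_radius]
    have := (lt_div_iff₀ ht0).mp hsmall
    linarith
  · exact fun B hBu => (hut hBu).2.1
  · exact fun B hBu => (hut hBu).2.2
end
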